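/- arXiv:2508.21647 — 3 statements merged into one kernel-verified Lean document; each statement's English description precedes it below -/
import Mathlib

section
/- Every non-empty antichain Γ in the positive roots Δ⁺ of a finite root system is linearly independent in the root space. -/
open RootPairing

/-- Strict Cauchy–Schwarz for the canonical bilinear form of a finite root pairing. -/
lemma rootForm_sq_lt {ι M N : Type*} [Fintype ι] [AddCommGroup M] [Module ℚ M]
    [AddCommGroup N] [Module ℚ N] (P : RootPairing ι ℚ M N) {x y : M}
    (hx : x ∈ P.rootSpan ℚ) (hy : y ∈ P.rootSpan ℚ)
    (h : LinearIndependent ℚ ![x, y]) :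
    P.RootForm x y * P.RootForm x y < P.RootForm x x * P.RootForm y y := by
  have hy0 : y ≠ 0 := by
    have := h.ne_zero 1
    simpa using this
  have hyy : 0 < P.RootForm y y := P.rootForm_pos_of_ne_zero hy hy0
  set z : M := P.RootForm y y • x - P.RootForm x y • y with hzdef
  have hzmem : z ∈ P.rootSpan ℚ :=
    Submodule.sub_mem _ (Submodule.smul_mem _ _ hx) (Submodule.smul_mem _ _ hy)
  have hzne : z ≠ 0 := by
    intro h0
    have h0' : P.RootForm y y • x + (-(P.RootForm x y)) • y = 0 := by
      rw [neg_smul, ← sub_eq_add_neg, ← hzdef, h0]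
    obtain ⟨h1, -⟩ := (LinearIndependent.pair_iff.mp h) _ _ h0'
    exact hyy.ne' h1
  have hzz : 0 < P.RootForm z z := P.rootForm_pos_of_ne_zero hzmem hzne
  have hsym : P.RootForm y x = P.RootForm x y := by
    have := P.rootForm_symmetric.eq x y
    simpa using this.symm
  have hexp : P.RootForm z z =
      P.RootForm y y * (P.RootForm x x * P.RootForm y y - P.RootForm x y * P.RootForm x y) := by
    simp only [hzdef, map_sub, map_smul, LinearMap.sub_apply, LinearMap.smul_apply, smul_eq_mul]
    rw [hsym]; ring
  nlinarith [hzz, hyy, hexp]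

/-- A linear functional taking value `1` on each element of a linearly independent set `S`. -/
lemma exists_height_functional {M : Type*} [AddCommGroup M] [Module ℚ M] (S : Set M)
    (hli : LinearIndependent ℚ ((↑) : S → M)) :
    ∃ f : M →ₗ[ℚ] ℚ, ∀ s ∈ S, f s = 1 := by
  classical
  replace hli : LinearIndepOn ℚ id S := hli
  let b := Module.Basis.extend hli
  refine ⟨b.sumCoords, fun s hs => ?_⟩
  have hmem : s ∈ hli.extend (Set.subset_univ S) := hli.subset_extend _ hs
  have hb : b ⟨s, hmem⟩ = s := Module.Basis.extend_apply_self hli ⟨s, hmem⟩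
  rw [← hb]
  exact b.sumCoords_self_apply _

lemma height_pos {M : Type*} [AddCommGroup M] [Module ℚ M] {S : Set M} {f : M →ₗ[ℚ] ℚ}
    (hf : ∀ s ∈ S, f s = 1) {x : M} (hx : x ∈ AddSubmonoid.closure S) :
    0 ≤ f x ∧ (f x = 0 → x = 0) := by
  induction hx using AddSubmonoid.closure_induction with
  | mem s hs => exact ⟨by rw [hf s hs]; norm_num, fun h => absurd (hf s hs ▸ h) one_ne_zero⟩
  | zero => simp
  | add x y hx hy ihx ihy =>
      refine ⟨by rw [map_add]; exact add_nonneg ihx.1 ihy.1, fun h => ?_⟩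
      rw [map_add] at h
      have hx0 : f x = 0 := le_antisymm (by linarith [ihy.1]) ihx.1
      have hy0 : f y = 0 := by linarith
      rw [ihx.2 hx0, ihy.2 hy0, add_zero]



section OrderDefs

variable {V : Type*} [AddCommGroup V]

/-- The partial order on roots: `α ≼ β` iff `β - α` is a sum of simple roots (elements of `P`). -/
def rootLE (P : Set V) (α β : V) : Prop :=
  β - α ∈ AddSubmonoid.closure P

/-- An antichain in the positive roots `Δplus`: a set of pairwise non-comparable
positive roots, where `P` is the set of simple roots defining the order. -/
def IsAntichainIn (P Δplus Γ : Set V) : Prop :=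
  Γ ⊆ Δplus ∧ ∀ α ∈ Γ, ∀ β ∈ Γ, α ≠ β → ¬ rootLE P α β

end OrderDefs

/-- Every non-empty antichain `Γ` in the positive roots of a finite root
system is linearly independent. -/
theorem antichain_linearIndependent
    {ι M N : Type*} [Fintype ι] [AddCommGroup M] [Module ℚ M] [AddCommGroup N] [Module ℚ N]
    (Q : RootPairing ι ℚ M N) (hQspan : Submodule.span ℚ (Set.range Q.root) = ⊤)
    (hcrys : Q.IsCrystallographic) (hredu : Q.IsReduced)
    -- a system of positive roots `pos` with corresponding simple roots `sim`
    (pos sim : Set ι) (hsim : sim ⊆ pos)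
    (hspan : ∀ i ∈ pos, Q.root i ∈ AddSubmonoid.closure (Q.root '' sim))
    (hdec : ∀ i : ι, i ∈ pos ∨ ∃ j ∈ pos, Q.root i = -Q.root j)
    (hind : LinearIndependent ℚ (fun s : sim => Q.root s))
    (Γ : Set M) (hΓ : IsAntichainIn (Q.root '' sim) (Q.root '' pos) Γ)
    (hΓne : Γ.Nonempty) :
    LinearIndependent ℚ (fun a : Γ => (a : M)) := by
  classical
  set P := Q with hPdef
  set S : Set M := Q.root '' sim with hSdef
  have hli' : LinearIndependent ℚ ((↑) : S → M) := by
    have := hind.linearIndepOn_id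
    rwa [← Set.image_eq_range] at this
  obtain ⟨f, hf1⟩ := exists_height_functional S hli'
  -- positivity of `f` on `Γ`, plus membership facts
  have hfΓ : ∀ a ∈ Γ, a ∈ AddSubmonoid.closure S ∧ 0 < f a ∧ a ∈ P.rootSpan ℚ := by
    intro a ha
    obtain ⟨i, hi, rfl⟩ := hΓ.1 ha
    have hcl := hspan i hi
    have hnz : Q.root i ≠ 0 := P.ne_zero i
    obtain ⟨h0, h1⟩ := height_pos hf1 hcl
    exact ⟨hcl, h0.lt_of_ne (fun h => hnz (h1 h.symm)),
      Submodule.subset_span ⟨i, rfl⟩⟩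
  -- no difference of distinct antichain elements is a root
  have hnodiff : ∀ a ∈ Γ, ∀ c ∈ Γ, a ≠ c → ∀ k : ι, Q.root k ≠ a - c := by
    intro a ha c hc hac k hk
    rcases hdec k with hkpos | ⟨j, hj, hkj⟩
    · have h' : a - c ∈ AddSubmonoid.closure S := by rw [← hk]; exact hspan k hkpos
      exact hΓ.2 c hc a ha (Ne.symm hac) h'
    · have h2 : -Q.root j = a - c := by rw [← hkj]; exact hk
      have hj' : Q.root j = c - a := by
        rw [← neg_neg (Q.root j), h2]; abel
      have h' : c - a ∈ AddSubmonoid.closure S := by rw [← hj']; exact hspan j hj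
      exact hΓ.2 a ha c hc hac h'
  rw [linearIndependent_iff]
  intro l hl
  by_contra hne
  have hsupp : l.support.Nonempty := Finsupp.support_nonempty_iff.mpr hne
  set A : Finset Γ := l.support.filter (fun a => 0 < l a) with hAdef
  set Bf : Finset Γ := l.support.filter (fun a => ¬ 0 < l a) with hBdef
  have hlA : ∀ a ∈ A, 0 < l a := fun a ha => (Finset.mem_filter.mp ha).2
  have hlB : ∀ b ∈ Bf, l b < 0 := by
    intro b hb
    obtain ⟨hb1, hb2⟩ := Finset.mem_filter.mp hb
    exact lt_of_le_of_ne (not_lt.mp hb2) (Finsupp.mem_support_iff.mp hb1)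
  have hsum : ∑ a ∈ A, l a • (a : M) + ∑ a ∈ Bf, l a • (a : M) = 0 := by
    rw [hAdef, hBdef, Finset.sum_filter_add_sum_filter_not]
    rw [Finsupp.linearCombination_apply, Finsupp.sum] at hl
    exact hl
  -- apply the height functional
  have hfl : ∑ a ∈ A, l a * f a + ∑ a ∈ Bf, l a * f a = 0 := by
    have := congrArg f hsum
    simpa [map_sum, map_smul, smul_eq_mul] using this
  have hAne : A.Nonempty := by
    rcases Finset.eq_empty_or_nonempty A with hAe | hAne
    · exfalso
      have hBeq : Bf = l.support := by
        rw [hBdef]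
        rw [hAdef, Finset.filter_eq_empty_iff] at hAe
        exact Finset.filter_true_of_mem (fun a ha => hAe ha)
      have hBne : Bf.Nonempty := hBeq ▸ hsupp
      have : ∑ a ∈ Bf, l a * f a < 0 :=
        Finset.sum_neg (fun a ha => mul_neg_of_neg_of_pos (hlB a ha) (hfΓ a a.2).2.1) hBne
      rw [hAe] at hfl; simp at hfl; linarith
    · exact hAne
  have hBne : Bf.Nonempty := by
    rcases Finset.eq_empty_or_nonempty Bf with hBe | hBne
    · exfalso
      have hAeq : A = l.support := by
        rw [hAdef]
        rw [hBdef, Finset.filter_eq_empty_iff] at hBe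
        refine Finset.filter_true_of_mem (fun a ha => ?_)
        have := hBe ha; simpa using this
      have hAne' : A.Nonempty := hAeq ▸ hsupp
      have : 0 < ∑ a ∈ A, l a * f a :=
        Finset.sum_pos (fun a ha => mul_pos (hlA a ha) (hfΓ a a.2).2.1) hAne'
      rw [hBe] at hfl; simp at hfl; linarith
    · exact hBne
  set v : M := ∑ a ∈ A, l a • (a : M) with hvdef
  have hfv : 0 < f v := by
    have hfv' : f v = ∑ a ∈ A, l a * f a := by
      rw [hvdef, map_sum]
      exact Finset.sum_congr rfl fun a _ => by rw [map_smul, smul_eq_mul]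
    rw [hfv']
    exact Finset.sum_pos (fun a ha => mul_pos (hlA a ha) (hfΓ a a.2).2.1) hAne
  have hvne : v ≠ 0 := fun h => by rw [h, map_zero] at hfv; exact lt_irrefl _ hfv
  have hvmem : v ∈ P.rootSpan ℚ :=
    Submodule.sum_mem _ fun a _ => Submodule.smul_mem _ _ (hfΓ a a.2).2.2
  have hvv : 0 < P.RootForm v v := P.rootForm_pos_of_ne_zero hvmem hvne
  have hveq : v = ∑ b ∈ Bf, (-(l b)) • (b : M) := by
    have h' : v = -∑ a ∈ Bf, l a • (a : M) := by
      rw [hvdef, ← sub_eq_zero]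
      rw [sub_neg_eq_add]
      exact hsum
    rw [h', ← Finset.sum_neg_distrib]
    exact Finset.sum_congr rfl fun b _ => (neg_smul _ _).symm
  have hexists : ∃ a ∈ A, ∃ c ∈ Bf, 0 < P.RootForm (a : M) (c : M) := by
    by_contra hcon
    push_neg at hcon
    have hle : P.RootForm v v ≤ 0 := by
      nth_rewrite 2 [hveq]
      nth_rewrite 1 [hvdef]
      rw [map_sum]
      refine Finset.sum_nonpos fun c hc => ?_
      rw [map_smul, smul_eq_mul]
      refine mul_nonpos_of_nonneg_of_nonpos (by linarith [hlB c hc]) ?_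
      rw [map_sum, LinearMap.sum_apply]
      refine Finset.sum_nonpos fun a ha => ?_
      rw [map_smul, LinearMap.smul_apply, smul_eq_mul]
      exact mul_nonpos_of_nonneg_of_nonpos (le_of_lt (hlA a ha)) (hcon a ha c hc)
    linarith
  obtain ⟨a, haA, c, hcB, hRac⟩ := hexists
  obtain ⟨i, hipos, hia⟩ := hΓ.1 a.2
  obtain ⟨j, hjpos, hjc⟩ := hΓ.1 c.2
  have hac : (a : M) ≠ (c : M) := by
    intro h
    have := hlA a haA
    rw [Subtype.coe_injective h] at this
    linarith [hlB c hcB]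
  -- pairing positivity
  have hpij : 0 < P.pairing i j := by
    have h : 2 * P.RootForm (P.root i) (P.root j) = P.pairing i j * P.RootForm (P.root j) (P.root j) :=
      (P.posRootForm ℚ).two_mul_apply_root_root i j
    have hjj : 0 < P.RootForm (P.root j) (P.root j) :=
      P.rootForm_pos_of_ne_zero (Submodule.subset_span ⟨j, rfl⟩) (P.ne_zero j)
    rw [show P.root i = (a : M) from hia, show P.root j = (c : M) from hjc] at h
    rw [show P.root j = (c : M) from hjc] at hjj
    nlinarith
  have hpji : 0 < P.pairing j i := by
    have h : 2 * P.RootForm (P.root j) (P.root i) = P.pairing j i * P.RootForm (P.root i) (P.root i) :=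
      (P.posRootForm ℚ).two_mul_apply_root_root j i
    have hii : 0 < P.RootForm (P.root i) (P.root i) :=
      P.rootForm_pos_of_ne_zero (Submodule.subset_span ⟨i, rfl⟩) (P.ne_zero i)
    have hs : P.RootForm (P.root j) (P.root i) = P.RootForm (P.root i) (P.root j) := by
      have := P.rootForm_symmetric.eq (P.root j) (P.root i)
      simpa using this
    rw [hs, show P.root i = (a : M) from hia, show P.root j = (c : M) from hjc] at h
    rw [show P.root i = (a : M) from hia] at hii
    nlinarith
  -- the pair of roots is linearly independent
  have hpair : LinearIndependent ℚ ![Q.root i, Q.root j] := by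
    by_contra hcon
    rcases hredu.eq_or_eq_neg i j hcon with h1 | h1
    · exact hac (by rw [← hia, ← hjc]; exact h1)
    · have h2 : P.pairing i j = -2 := by
        have h3 := P.root_coroot'_eq_pairing j i
        rw [show P.root i = -P.root j from h1] at h3
        rw [map_neg] at h3
        rw [P.root_coroot'_eq_pairing j j] at h3
        rw [← h3, P.pairing_same]
      linarith
  -- Cauchy–Schwarz gives Coxeter weight < 4
  have hcs := rootForm_sq_lt P (Submodule.subset_span ⟨i, rfl⟩)
    (Submodule.subset_span ⟨j, rfl⟩) hpair
  have h2a : 2 * P.RootForm (P.root i) (P.root j) = P.pairing i j * P.RootForm (P.root j) (P.root j) :=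
    (P.posRootForm ℚ).two_mul_apply_root_root i j
  have h2b : 2 * P.RootForm (P.root j) (P.root i) = P.pairing j i * P.RootForm (P.root i) (P.root i) :=
    (P.posRootForm ℚ).two_mul_apply_root_root j i
  have hsymij : P.RootForm (P.root j) (P.root i) = P.RootForm (P.root i) (P.root j) := by
    have := P.rootForm_symmetric.eq (P.root j) (P.root i)
    simpa using this
  have hBii : 0 < P.RootForm (P.root i) (P.root i) :=
    P.rootForm_pos_of_ne_zero (Submodule.subset_span ⟨i, rfl⟩) (P.ne_zero i)
  have hBjj : 0 < P.RootForm (P.root j) (P.root j) :=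
    P.rootForm_pos_of_ne_zero (Submodule.subset_span ⟨j, rfl⟩) (P.ne_zero j)
  rw [hsymij] at h2b
  have hprod : (2 * P.RootForm (P.root i) (P.root j)) * (2 * P.RootForm (P.root i) (P.root j)) =
      (P.pairing i j * P.RootForm (P.root j) (P.root j)) *
        (P.pairing j i * P.RootForm (P.root i) (P.root i)) := by
    rw [← h2a, ← h2b]
  have hcw : P.pairing i j * P.pairing j i < 4 := by
    nlinarith [hcs, hprod, mul_pos hBii hBjj]
  haveI := hcrys
  obtain ⟨m, hm⟩ := IsValuedIn.exists_value (P := P) (S := ℤ) i j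
  rw [eq_intCast] at hm
  obtain ⟨n, hn⟩ := IsValuedIn.exists_value (P := P) (S := ℤ) j i
  rw [eq_intCast] at hn
  have hm1 : 1 ≤ m := by
    have : (0 : ℚ) < (m : ℚ) := by rw [hm]; exact hpij
    exact_mod_cast this
  have hn1 : 1 ≤ n := by
    have : (0 : ℚ) < (n : ℚ) := by rw [hn]; exact hpji
    exact_mod_cast this
  have hmn : m * n < 4 := by
    have h4 : ((m * n : ℤ) : ℚ) < 4 := by push_cast; rw [hm, hn]; exact hcw
    exact_mod_cast h4
  have hone : m = 1 ∨ n = 1 := by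
    by_contra hcon
    push_neg at hcon
    have h2m : 2 ≤ m := by omega
    have h2n : 2 ≤ n := by omega
    nlinarith
  rcases hone with h1 | h1
  · -- pairing i j = 1, so root i - root j = a - c is a root
    have hp1 : P.pairing i j = 1 := by rw [← hm, h1]; norm_num
    refine hnodiff (a : M) a.2 (c : M) c.2 hac (P.reflectionPerm j i) ?_
    rw [P.root_reflectionPerm j i, P.reflection_apply_root, hp1, one_smul, hia, hjc]
  · have hp1 : P.pairing j i = 1 := by rw [← hn, h1]; norm_num
    refine hnodiff (c : M) c.2 (a : M) a.2 (Ne.symm hac) (P.reflectionPerm i j) ?_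
    rw [P.root_reflectionPerm i j, P.reflection_apply_root, hp1, one_smul, hia, hjc]
end

section
/- Let Γ ⊆ Δ⁺ be a non-empty antichain in the positive roots of a finite root system of rank ℓ with simple roots α₁,…,α_ℓ. Then there exist H in the Cartan subalgebra h and a positive integer n such that α_i(H) is a positive integer for every simple root α_i, and γ(H) = n for every γ ∈ Γ. -/
set_option linter.unusedSectionVars false


section DensityHelper

variable {n : Type*} [Fintype n] [DecidableEq n]

private lemma density_aux :
    ∀ (k : ℕ) (L : List (n → ℚ)), L.length = k → ∀ (x : n → ℝ),
    (∀ f ∈ L, ∑ i, (f i : ℝ) * x i = 0) →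
    ∀ ε : ℝ, 0 < ε → ∃ w : n → ℚ, (∀ f ∈ L, ∑ i, f i * w i = 0) ∧ ∀ i, |x i - (w i : ℝ)| < ε := by
  intro k
  induction k with
  | zero =>
      intro L hL x _ ε hε
      rcases List.length_eq_zero_iff.mp hL with rfl
      choose w hw using fun i => exists_rat_near (x i) hε
      exact ⟨w, by simp, hw⟩
  | succ k ih =>
      intro L hL x hx ε hε
      rcases L with _ | ⟨f, L'⟩
      · simp at hL
      simp only [List.length_cons, Nat.succ.injEq] at hL
      by_cases hf : f = 0
      · obtain ⟨w, hw1, hw2⟩ := ih L' hL x (fun g hg => hx g (List.mem_cons_of_mem f hg)) ε hε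
        refine ⟨w, ?_, hw2⟩
        intro g hg
        rcases List.mem_cons.mp hg with rfl | hg
        · simp [hf]
        · exact hw1 g hg
      · obtain ⟨j, hj⟩ : ∃ j, f j ≠ 0 := by
          by_contra h; push_neg at h; exact hf (funext h)
        have hfjR : ((f j : ℝ)) ≠ 0 := by exact_mod_cast hj
        set Qb : ℝ := (∑ i, |(f i : ℝ)|) / |(f j : ℝ)| with hQb
        have hQb0 : 0 ≤ Qb := by
          apply div_nonneg
          · exact Finset.sum_nonneg fun i _ => abs_nonneg _
          · exact abs_nonneg _
        set B : ℝ := 1 + Qb with hBdef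
        have hB1 : (1:ℝ) ≤ B := by simp [hBdef, hQb0]
        have hBpos : 0 < B := lt_of_lt_of_le one_pos hB1
        set ε' : ℝ := ε / B with hε'
        have hε'pos : 0 < ε' := div_pos hε hBpos
        -- the mapped list
        set L'' : List (n → ℚ) := L'.map (fun g => g - (g j / f j) • f) with hL''
        have hL''len : L''.length = k := by simp [hL'', hL]
        have hx'' : ∀ g ∈ L'', ∑ i, (g i : ℝ) * x i = 0 := by
          intro g hg
          rcases List.mem_map.mp hg with ⟨g₀, hg₀, rfl⟩
          have h1 : ∑ i, (g₀ i : ℝ) * x i = 0 := hx g₀ (List.mem_cons_of_mem f hg₀)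
          have h2 : ∑ i, (f i : ℝ) * x i = 0 := hx f List.mem_cons_self
          have : ∀ i, (((g₀ - (g₀ j / f j) • f) i : ℚ) : ℝ) * x i
              = (g₀ i : ℝ) * x i - ((g₀ j : ℝ) / (f j : ℝ)) * ((f i : ℝ) * x i) := by
            intro i
            simp only [Pi.sub_apply, Pi.smul_apply, smul_eq_mul]
            push_cast
            ring
          rw [Finset.sum_congr rfl (fun i _ => this i), Finset.sum_sub_distrib, h1,
            ← Finset.mul_sum, h2]
          ring
        obtain ⟨w'', hw''1, hw''2⟩ := ih L'' hL''len x hx'' ε' hε'pos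
        set S : ℚ := ∑ i, f i * w'' i with hS
        set w : n → ℚ := fun i => w'' i + (-(S / f j)) * (if i = j then 1 else 0) with hw
        have hsum_fw : ∑ i, f i * w i = 0 := by
          have : ∀ i, f i * w i = f i * w'' i + (-(S / f j)) * (f i * (if i = j then 1 else 0)) := by
            intro i; simp only [hw]; ring
          rw [Finset.sum_congr rfl (fun i _ => this i), Finset.sum_add_distrib, ← Finset.mul_sum]
          have : ∑ i, f i * (if i = j then (1:ℚ) else 0) = f j := by
            rw [Finset.sum_congr rfl (fun i _ => by rw [mul_ite, mul_one, mul_zero])]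
            simp
          rw [this, ← hS]
          field_simp
          ring
        refine ⟨w, ?_, ?_⟩
        · intro g hg
          rcases List.mem_cons.mp hg with rfl | hg
          · exact hsum_fw
          · have hg'' : ∑ i, (g i - (g j / f j) * f i) * w'' i = 0 := by
              have := hw''1 (g - (g j / f j) • f) (List.mem_map.mpr ⟨g, hg, rfl⟩)
              simpa using this
            have hgw'' : ∑ i, g i * w'' i = (g j / f j) * S := by
              have hsplit : ∑ i, (g i - (g j / f j) * f i) * w'' i
                  = ∑ i, g i * w'' i - (g j / f j) * ∑ i, f i * w'' i := by
                rw [Finset.mul_sum, ← Finset.sum_sub_distrib]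
                exact Finset.sum_congr rfl fun i _ => by ring
              rw [hsplit, ← hS] at hg''
              linarith
            have : ∀ i, g i * w i = g i * w'' i + (-(S / f j)) * (g i * (if i = j then 1 else 0)) := by
              intro i; simp only [hw]; ring
            rw [Finset.sum_congr rfl (fun i _ => this i), Finset.sum_add_distrib, ← Finset.mul_sum]
            have : ∑ i, g i * (if i = j then (1:ℚ) else 0) = g j := by
              rw [Finset.sum_congr rfl (fun i _ => by rw [mul_ite, mul_one, mul_zero])]
              simp
            rw [this, hgw'']
            ring
        · intro i
          by_cases hij : i = j
          · subst hij
            have hwj : w i = w'' i - S / f i := by simp [hw]; ring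
            have hSreal : ((S : ℝ)) = ∑ l, (f l : ℝ) * ((w'' l : ℝ) - x l) := by
              have h2 : ∑ l, (f l : ℝ) * x l = 0 := hx f List.mem_cons_self
              have : ((S : ℝ)) = ∑ l, (f l : ℝ) * (w'' l : ℝ) := by
                rw [hS]; push_cast; rfl
              rw [this, ← sub_zero (∑ l, (f l : ℝ) * (w'' l : ℝ)), ← h2,
                ← Finset.sum_sub_distrib]
              exact Finset.sum_congr rfl fun l _ => by ring
            have hSbound : |(S : ℝ)| ≤ (∑ l, |(f l : ℝ)|) * ε' := by
              rw [hSreal]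
              calc |∑ l, (f l : ℝ) * ((w'' l : ℝ) - x l)| ≤ ∑ l, |(f l : ℝ) * ((w'' l : ℝ) - x l)| :=
                    Finset.abs_sum_le_sum_abs _ _
                _ ≤ ∑ l, |(f l : ℝ)| * ε' := by
                    apply Finset.sum_le_sum
                    intro l _
                    rw [abs_mul]
                    exact mul_le_mul_of_nonneg_left (by
                      rw [abs_sub_comm]; exact le_of_lt (hw''2 l)) (abs_nonneg _)
                _ = (∑ l, |(f l : ℝ)|) * ε' := by rw [Finset.sum_mul]
            have : |x i - (w i : ℝ)| ≤ |x i - (w'' i : ℝ)| + |(S:ℝ)| / |(f i : ℝ)| := by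
              rw [hwj]
              push_cast
              have : x i - ((w'' i : ℝ) - (S:ℝ)/(f i : ℝ)) = (x i - (w'' i : ℝ)) + (S:ℝ)/(f i:ℝ) := by
                ring
              rw [this]
              refine (abs_add_le _ _).trans ?_
              rw [abs_div]
            refine lt_of_le_of_lt this ?_
            have habs : 0 < |(f i : ℝ)| := abs_pos.mpr hfjR
            have h2 : |(S:ℝ)| / |(f i : ℝ)| ≤ Qb * ε' := by
              have := (div_le_div_iff_of_pos_right habs).mpr hSbound
              refine this.trans_eq ?_
              rw [hQb, div_mul_eq_mul_div]
            have h3 : ε' + Qb * ε' = ε := by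
              have h4 : ε' * B = ε := div_mul_cancel₀ ε (ne_of_gt hBpos)
              rw [hBdef] at h4
              linarith [h4]
            have h5 : |x i - (w'' i : ℝ)| < ε' := hw''2 i
            linarith
          · have : w i = w'' i := by simp [hw, hij]
            rw [this]
            exact lt_of_lt_of_le (hw''2 i) (by
              rw [hε']
              exact div_le_self (le_of_lt hε) hB1)

end DensityHelper


section StiemkeHelper

set_option maxHeartbeats 1000000 in
open Pointwise Classical in
private lemma stiemke {n K : Type*} [Fintype n] [DecidableEq n] [Fintype K] [DecidableEq K]
    (dens : ∀ (L : List (K → ℚ)) (x : K → ℝ),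
      (∀ f ∈ L, ∑ i, (f i : ℝ) * x i = 0) →
      ∀ ε : ℝ, 0 < ε → ∃ w : K → ℚ, (∀ f ∈ L, ∑ i, f i * w i = 0) ∧ ∀ i, |x i - (w i : ℝ)| < ε)
    (dens' : ∀ (L : List (n → ℚ)) (x : n → ℝ),
      (∀ f ∈ L, ∑ i, (f i : ℝ) * x i = 0) →
      ∀ ε : ℝ, 0 < ε → ∃ w : n → ℚ, (∀ f ∈ L, ∑ i, f i * w i = 0) ∧ ∀ i, |x i - (w i : ℝ)| < ε)
    (r : K → n → ℚ)
    (hnocert : ∀ u : K → ℚ, (∀ e, 0 ≤ ∑ k, u k * r k e) → ∀ e, ∑ k, u k * r k e = 0) :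
    ∃ c : n → ℚ, (∀ e, 0 < c e) ∧ ∀ k, ∑ e, r k e * c e = 0 := by
  -- The real linear map given by the rows
  let Dmap : (n → ℝ) →ₗ[ℝ] (K → ℝ) :=
    { toFun := fun x => fun k => ∑ e, (r k e : ℝ) * x e
      map_add' := by
        intro x y; funext k
        simp only [Pi.add_apply, mul_add, Finset.sum_add_distrib]
      map_smul' := by
        intro t x; funext k
        simp only [Pi.smul_apply, smul_eq_mul, RingHom.id_apply, Finset.mul_sum]
        exact Finset.sum_congr rfl fun e _ => by ring }
  set V : Submodule ℝ (n → ℝ) := LinearMap.ker Dmap with hV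
  by_cases hpos : ∃ x : n → ℝ, x ∈ V ∧ ∀ e, 0 < x e
  · -- rationalize the positive solution
    obtain ⟨x, hxV, hxpos⟩ := hpos
    by_cases hne : Nonempty n
    · have hxrows : ∀ f ∈ (Finset.univ : Finset K).toList.map (fun k => r k),
          ∑ e, (f e : ℝ) * x e = 0 := by
        intro f hf
        rcases List.mem_map.mp hf with ⟨kk, _, rfl⟩
        have : Dmap x = 0 := hxV
        have := congr_fun this kk
        exact this
      set ε : ℝ := (Finset.univ.inf' (Finset.univ_nonempty (α := n)) x) with hεdef
      have hεpos : 0 < ε := by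
        rw [hεdef]
        rw [Finset.lt_inf'_iff]
        intro e _
        exact hxpos e
      obtain ⟨w, hw1, hw2⟩ := dens' _ x hxrows ε hεpos
      refine ⟨w, ?_, ?_⟩
      · intro e
        have h1 : |x e - (w e : ℝ)| < ε := hw2 e
        have h2 : ε ≤ x e := by
          rw [hεdef]
          exact Finset.inf'_le _ (Finset.mem_univ e)
        have : (0:ℝ) < (w e : ℝ) := by
          have := abs_lt.mp h1
          linarith
        exact_mod_cast this
      · intro k
        exact hw1 (r k) (List.mem_map.mpr ⟨k, by simp, rfl⟩)
    · -- n is empty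
      refine ⟨fun _ => 1, fun e => absurd ⟨e⟩ hne, fun k => ?_⟩
      rw [Finset.sum_eq_zero]
      intro e _
      exact absurd ⟨e⟩ hne
  · -- separation argument leads to a contradiction with hnocert
    exfalso
    push_neg at hpos
    -- the open convex set
    set Pos : Set (n → ℝ) := Set.univ.pi (fun _ => Set.Ioi (0:ℝ)) with hPos
    set O : Set (n → ℝ) := (V : Set (n → ℝ)) + Pos with hO
    have hPosOpen : IsOpen Pos := isOpen_set_pi Set.finite_univ (fun _ _ => isOpen_Ioi)
    have hOopen : IsOpen O := IsOpen.add_left hPosOpen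
    have hOconv : Convex ℝ O := (V.convex).add (convex_pi (fun _ _ => convex_Ioi 0))
    have hmemPos : ∀ p : n → ℝ, (∀ e, 0 < p e) → p ∈ Pos := by
      intro p hp; intro e _; exact hp e
    have h0O : (0 : n → ℝ) ∉ O := by
      intro h0
      rcases Set.mem_add.mp h0 with ⟨v, hv, p, hp, hvp⟩
      obtain ⟨e, he⟩ := hpos (-v) (neg_mem hv)
      have : v e + p e = 0 := congr_fun hvp e
      have hpe : 0 < p e := hp e (Set.mem_univ e)
      simp only [Pi.neg_apply] at he
      linarith
    obtain ⟨f, hf⟩ := geometric_hahn_banach_open_point hOconv hOopen h0O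
    rw [map_zero] at hf
    set one : n → ℝ := fun _ => 1 with hone
    have honeO : one ∈ O := by
      refine Set.mem_add.mpr ⟨0, zero_mem _, one, hmemPos one (fun _ => one_pos), by simp⟩
    have hfone : f one < 0 := hf one honeO
    -- f vanishes on V
    have hfV : ∀ v, v ∈ V → f v = 0 := by
      intro v hv
      by_contra hfv
      have hmem : ∀ t : ℝ, (t • v + one) ∈ O := by
        intro t
        exact Set.mem_add.mpr ⟨t • v, Submodule.smul_mem _ _ hv, one,
          hmemPos one (fun _ => one_pos), rfl⟩
      have hlt : ∀ t : ℝ, t * f v + f one < 0 := by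
        intro t
        have := hf _ (hmem t)
        rwa [map_add, map_smul, smul_eq_mul] at this
      have := hlt ((1 - f one) / f v)
      rw [div_mul_cancel₀ _ hfv] at this
      linarith
    -- the coordinates of f
    set sing : n → (n → ℝ) := fun e => fun j => if e = j then 1 else 0 with hsing
    have hexpand : ∀ x : n → ℝ, f x = ∑ e, x e * f (sing e) := by
      intro x
      conv_lhs => rw [pi_eq_sum_univ x]
      rw [map_sum]
      exact Finset.sum_congr rfl fun e _ => by rw [map_smul, smul_eq_mul]
    set y : n → ℝ := fun e => - f (sing e) with hy
    have hynn : ∀ e, 0 ≤ y e := by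
      intro e
      by_contra hcon
      push_neg at hcon
      -- 0 < f (sing e)
      have hfs : 0 < f (sing e) := by simp only [hy, Pi.neg_apply] at hcon; linarith
      have hδmem : ∀ δ : ℝ, 0 < δ → (sing e + δ • one) ∈ O := by
        intro δ hδ
        refine Set.mem_add.mpr ⟨0, zero_mem _, sing e + δ • one, hmemPos _ ?_, by simp⟩
        intro e'
        simp only [hsing, Pi.add_apply, Pi.smul_apply, hone, smul_eq_mul, mul_one]
        by_cases he : e = e' <;> simp [he] <;> linarith
      have hδlt : ∀ δ : ℝ, 0 < δ → f (sing e) + δ * f one < 0 := by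
        intro δ hδ
        have := hf _ (hδmem δ hδ)
        rwa [map_add, map_smul, smul_eq_mul] at this
      set A := |f one| with hA
      have hAnn : 0 ≤ A := abs_nonneg _
      set D := 1 + A with hD
      have hDpos : 0 < D := by positivity
      set δ := f (sing e) / D with hδ
      have hδpos : 0 < δ := div_pos hfs hDpos
      have h1 := hδlt δ hδpos
      have hδD : δ * D = f (sing e) := div_mul_cancel₀ _ (ne_of_gt hDpos)
      have h2 : -A ≤ f one := neg_abs_le (f one)
      have h3 : δ * (-A) ≤ δ * f one := mul_le_mul_of_nonneg_left h2 (le_of_lt hδpos)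
      have h4 : f (sing e) < δ * A := by nlinarith
      have h5 := mul_lt_mul_of_pos_right h4 hDpos
      have h6 : δ * A * D = f (sing e) * A := by
        calc δ * A * D = (δ * D) * A := by ring
          _ = f (sing e) * A := by rw [hδD]
      rw [h6] at h5
      rw [hD] at h5
      nlinarith
    have hysum : ∑ e, y e = - f one := by
      have h1 : f one = ∑ e, f (sing e) := by
        rw [hexpand one]
        exact Finset.sum_congr rfl fun e _ => by simp [hone]
      calc ∑ e, y e = ∑ e, -(f (sing e)) := rfl
        _ = - ∑ e, f (sing e) := by rw [Finset.sum_neg_distrib]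
        _ = - f one := by rw [← h1]
    have hyne : ∃ e, 0 < y e := by
      by_contra hcon
      push_neg at hcon
      have : ∑ e, y e ≤ 0 := Finset.sum_nonpos (fun e _ => hcon e)
      rw [hysum] at this
      linarith
    -- factor f through Dmap
    have hVker : V ≤ LinearMap.ker (f : (n → ℝ) →ₗ[ℝ] ℝ) := by
      intro v hv
      simpa using hfV v hv
    set fbar := Submodule.liftQ V (f : (n → ℝ) →ₗ[ℝ] ℝ) hVker with hfbar
    set equiv := LinearMap.quotKerEquivRange Dmap with hequiv
    obtain ⟨W, hW⟩ := Submodule.exists_isCompl (LinearMap.range Dmap)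
    set proj := (LinearMap.range Dmap).linearProjOfIsCompl W hW with hproj
    set Y : (K → ℝ) →ₗ[ℝ] ℝ := fbar ∘ₗ (equiv.symm : _ →ₗ[ℝ] _) ∘ₗ proj with hY
    have hYD : ∀ x : n → ℝ, Y (Dmap x) = f x := by
      intro x
      have h1 : proj (Dmap x) = ⟨Dmap x, LinearMap.mem_range_self Dmap x⟩ := by
        exact Submodule.linearProjOfIsCompl_apply_left hW ⟨Dmap x, LinearMap.mem_range_self Dmap x⟩
      have h2 : equiv (Submodule.Quotient.mk x) = ⟨Dmap x, LinearMap.mem_range_self Dmap x⟩ := by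
        apply Subtype.ext
        exact LinearMap.quotKerEquivRange_apply_mk Dmap x
      have h3 : equiv.symm ⟨Dmap x, LinearMap.mem_range_self Dmap x⟩ = Submodule.Quotient.mk x := by
        rw [← h2, LinearEquiv.symm_apply_apply]
      simp only [hY, LinearMap.comp_apply, LinearEquiv.coe_coe]
      rw [h1, h3]
      exact Submodule.liftQ_apply V _ x
    set singK : K → (K → ℝ) := fun k => fun j => if k = j then 1 else 0 with hsingK
    set u : K → ℝ := fun k => Y (singK k) with hu
    have hYexpand : ∀ z : K → ℝ, Y z = ∑ k, z k * u k := by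
      intro z
      conv_lhs => rw [pi_eq_sum_univ z]
      rw [map_sum]
      exact Finset.sum_congr rfl fun k _ => by rw [map_smul, smul_eq_mul]
    have hkey : ∀ e, ∑ k, u k * (r k e : ℝ) = - y e := by
      intro e
      have h1 : f (sing e) = Y (Dmap (sing e)) := (hYD _).symm
      have h2 : Dmap (sing e) = fun k => (r k e : ℝ) := by
        funext k
        show (∑ e', (r k e' : ℝ) * (if e = e' then 1 else 0)) = (r k e : ℝ)
        rw [Finset.sum_congr rfl (fun e' _ => by rw [mul_ite, mul_one, mul_zero])]
        simp
      rw [h2, hYexpand] at h1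
      have hc : ∑ k, u k * (r k e : ℝ) = ∑ k, (r k e : ℝ) * u k :=
        Finset.sum_congr rfl fun k _ => mul_comm _ _
      rw [hc, ← h1]
      simp [hy]
    -- switch sign
    set u' : K → ℝ := fun k => - u k with hu'
    have hkey' : ∀ e, ∑ k, u' k * (r k e : ℝ) = y e := by
      intro e
      have := hkey e
      rw [← neg_eq_iff_eq_neg] at this
      rw [← this, ← Finset.sum_neg_distrib]
      exact Finset.sum_congr rfl fun k _ => by simp [hu']
    -- rationalize u'
    set Z : Finset n := Finset.univ.filter (fun e => y e = 0) with hZ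
    set L : List (K → ℚ) := Z.toList.map (fun e => fun k => r k e) with hL
    have hsat : ∀ g ∈ L, ∑ k, (g k : ℝ) * u' k = 0 := by
      intro g hg
      rcases List.mem_map.mp hg with ⟨e, he, rfl⟩
      have heZ : y e = 0 := by
        have := Finset.mem_toList.mp he
        exact (Finset.mem_filter.mp this).2
      rw [← heZ, ← hkey' e]
      exact Finset.sum_congr rfl fun k _ => mul_comm _ _
    -- choose ε
    set Rbig : ℝ := 1 + ∑ e, ∑ k, |(r k e : ℝ)| with hRbig
    have hRbig1 : (1:ℝ) ≤ Rbig := by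
      rw [hRbig]
      have : (0:ℝ) ≤ ∑ e, ∑ k, |(r k e : ℝ)| :=
        Finset.sum_nonneg fun e _ => Finset.sum_nonneg fun k _ => abs_nonneg _
      linarith
    have hRbigpos : 0 < Rbig := lt_of_lt_of_le one_pos hRbig1
    obtain ⟨e₀, he₀⟩ := hyne
    set Posn : Finset n := Finset.univ.filter (fun e => 0 < y e) with hPosn
    have he₀P : e₀ ∈ Posn := Finset.mem_filter.mpr ⟨Finset.mem_univ _, he₀⟩
    have hPosnne : Posn.Nonempty := ⟨e₀, he₀P⟩
    set m : ℝ := Posn.inf' hPosnne y with hm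
    have hmpos : 0 < m := by
      rw [hm, Finset.lt_inf'_iff]
      intro e he
      exact (Finset.mem_filter.mp he).2
    set ε : ℝ := m / Rbig with hε
    have hεpos : 0 < ε := div_pos hmpos hRbigpos
    obtain ⟨w, hw1, hw2⟩ := dens L u' hsat ε hεpos
    -- w is a rational certificate
    have hwval : ∀ e, |(∑ k, (w k : ℝ) * (r k e : ℝ)) - y e| ≤ (∑ k, |(r k e:ℝ)|) * ε := by
      intro e
      rw [← hkey' e]
      have : (∑ k, (w k : ℝ) * (r k e : ℝ)) - (∑ k, u' k * (r k e : ℝ))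
          = ∑ k, ((w k : ℝ) - u' k) * (r k e : ℝ) := by
        rw [← Finset.sum_sub_distrib]
        exact Finset.sum_congr rfl fun k _ => by ring
      rw [this]
      calc |∑ k, ((w k : ℝ) - u' k) * (r k e : ℝ)| ≤ ∑ k, |((w k : ℝ) - u' k) * (r k e : ℝ)| :=
            Finset.abs_sum_le_sum_abs _ _
        _ ≤ ∑ k, |(r k e : ℝ)| * ε := by
            apply Finset.sum_le_sum
            intro k _
            rw [abs_mul, mul_comm]
            apply mul_le_mul_of_nonneg_left _ (abs_nonneg _)
            rw [abs_sub_comm]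
            exact le_of_lt (hw2 k)
        _ = (∑ k, |(r k e:ℝ)|) * ε := by rw [Finset.sum_mul]
    have hcertnn : ∀ e, 0 ≤ ∑ k, w k * r k e := by
      intro e
      by_cases heZ : e ∈ Z
      · have : ∑ k, (fun k => r k e) k * w k = 0 :=
          hw1 _ (List.mem_map.mpr ⟨e, Finset.mem_toList.mpr heZ, rfl⟩)
        have h0 : ∑ k, w k * r k e = 0 := by
          rw [← this]; exact Finset.sum_congr rfl fun k _ => mul_comm _ _
        rw [h0]
      · -- y e > 0 here
        have hype : 0 < y e := by
          have := hynn e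
          rcases lt_or_eq_of_le this with h | h
          · exact h
          · exact absurd (Finset.mem_filter.mpr ⟨Finset.mem_univ e, h.symm⟩) heZ
        have heP : e ∈ Posn := Finset.mem_filter.mpr ⟨Finset.mem_univ _, hype⟩
        have hb := hwval e
        have hrb : (∑ k, |(r k e:ℝ)|) * ε < m := by
          rw [hε]
          rw [mul_div_assoc']
          rw [div_lt_iff₀ hRbigpos]
          have h1 : ∑ k, |(r k e:ℝ)| < Rbig := by
            rw [hRbig]
            have : ∑ k, |(r k e:ℝ)| ≤ ∑ e', ∑ k, |(r k e':ℝ)| := by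
              exact Finset.single_le_sum (f := fun e' => ∑ k, |(r k e':ℝ)|)
                (fun e' _ => Finset.sum_nonneg fun k _ => abs_nonneg _) (Finset.mem_univ e)
            linarith
          nlinarith [hmpos]
        have hme : m ≤ y e := Finset.inf'_le _ heP
        have habs := abs_le.mp hb
        have : (0:ℝ) < ∑ k, (w k:ℝ) * (r k e : ℝ) := by linarith
        have hcast : (0:ℝ) < ((∑ k, w k * r k e : ℚ) : ℝ) := by push_cast; exact this
        exact_mod_cast le_of_lt hcast
    have := hnocert w hcertnn e₀
    -- but at e₀ the value is positive
    have hype : 0 < y e₀ := he₀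
    have hb := hwval e₀
    have hrb : (∑ k, |(r k e₀:ℝ)|) * ε < m := by
      rw [hε, mul_div_assoc', div_lt_iff₀ hRbigpos]
      have h1 : ∑ k, |(r k e₀:ℝ)| < Rbig := by
        rw [hRbig]
        have : ∑ k, |(r k e₀:ℝ)| ≤ ∑ e', ∑ k, |(r k e':ℝ)| := by
          exact Finset.single_le_sum (f := fun e' => ∑ k, |(r k e':ℝ)|)
            (fun e' _ => Finset.sum_nonneg fun k _ => abs_nonneg _) (Finset.mem_univ e₀)
        linarith
      nlinarith [hmpos]
    have hme : m ≤ y e₀ := Finset.inf'_le _ he₀P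
    have habs := abs_le.mp hb
    have hgt : (0:ℝ) < ∑ k, (w k:ℝ) * (r k e₀ : ℝ) := by linarith
    have : ((∑ k, w k * r k e₀ : ℚ) : ℝ) = 0 := by exact_mod_cast this
    push_cast at this
    linarith

end StiemkeHelper


section RootFacts

variable {ι M N : Type*} [Fintype ι] [AddCommGroup M] [Module ℚ M] [AddCommGroup N] [Module ℚ N]

private lemma closure_multiset {S : Set M} {x : M} (hx : x ∈ AddSubmonoid.closure S) :
    ∃ s : Multiset M, (∀ y ∈ s, y ∈ S) ∧ s.sum = x := by
  induction hx using AddSubmonoid.closure_induction with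
  | mem y hy => exact ⟨{y}, by simpa using hy, by simp⟩
  | zero => exact ⟨0, by simp, rfl⟩
  | add x y hx hy ihx ihy =>
      obtain ⟨s₁, hs₁, hsum₁⟩ := ihx
      obtain ⟨s₂, hs₂, hsum₂⟩ := ihy
      refine ⟨s₁ + s₂, ?_, by rw [Multiset.sum_add, hsum₁, hsum₂]⟩
      intro z hz
      rcases Multiset.mem_add.mp hz with h | h
      · exact hs₁ z h
      · exact hs₂ z h

private lemma exists_dual_on_sim (Q : RootPairing ι ℚ M N) (sim : Set ι)
    (hind : LinearIndependent ℚ (fun s : sim => Q.root s)) (c : M → ℚ) :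
    ∃ φ : Module.Dual ℚ M, ∀ s : ι, s ∈ sim → φ (Q.root s) = c (Q.root s) := by
  classical
  set v : sim → M := fun s => Q.root s with hv
  let b : Module.Basis sim ℚ (Submodule.span ℚ (Set.range v)) := Module.Basis.span hind
  let f : Submodule.span ℚ (Set.range v) →ₗ[ℚ] ℚ := b.constr ℚ (fun s => c (Q.root s))
  obtain ⟨T, hT⟩ := Submodule.exists_isCompl (Submodule.span ℚ (Set.range v))
  let π := (Submodule.span ℚ (Set.range v)).linearProjOfIsCompl T hT
  refine ⟨f ∘ₗ π, ?_⟩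
  intro s hs
  have hmem : Q.root s ∈ Submodule.span ℚ (Set.range v) :=
    Submodule.subset_span ⟨⟨s, hs⟩, rfl⟩
  have hπ : π (Q.root s) = ⟨Q.root s, hmem⟩ :=
    Submodule.linearProjOfIsCompl_apply_left hT ⟨Q.root s, hmem⟩
  have hb : b ⟨s, hs⟩ = ⟨Q.root s, hmem⟩ := by
    apply Subtype.ext
    exact congrArg Subtype.val (Module.Basis.span_apply hind ⟨s, hs⟩)
  have : f ⟨Q.root s, hmem⟩ = c (Q.root s) := by
    rw [← hb]
    exact b.constr_basis ℚ _ _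
  simp only [LinearMap.comp_apply]
  rw [hπ, this]

private lemma root_sub_mem (P : RootPairing ι ℚ M N) (hP : P.rootSpan ℚ = ⊤)
    (hcrys : P.IsCrystallographic) (hredu : P.IsReduced) (i j : ι)
    (hg : 0 < P.RootForm (P.root i) (P.root j)) (hne : P.root i ≠ P.root j) :
    ∃ k, P.root i - P.root j = P.root k := by
  haveI := hcrys
  haveI := hredu
  have hjj : 0 < P.RootForm (P.root j) (P.root j) :=
    P.rootForm_pos_of_ne_zero (Submodule.subset_span (Set.mem_range_self j)) (P.ne_zero j)
  have h2 := P.toInvariantForm.two_mul_apply_root_root i j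
  simp only [RootPairing.toInvariantForm_form] at h2
  have hp : 0 < P.pairing i j := by
    by_contra hc
    push_neg at hc
    nlinarith
  have hpz : 0 < P.pairingIn ℤ i j := by
    have h' := P.algebraMap_pairingIn ℤ i j
    rw [algebraMap_int_eq, eq_intCast] at h'
    have h'' : (0:ℚ) < (P.pairingIn ℤ i j : ℚ) := by rw [h']; exact hp
    exact_mod_cast h''
  have hij : i ≠ j := fun h => hne (h ▸ rfl)
  obtain ⟨k, hk⟩ := P.root_sub_root_mem_of_pairingIn_pos hpz hij
  exact ⟨k, hk.symm⟩

private lemma root_add_mem (P : RootPairing ι ℚ M N) (hP : P.rootSpan ℚ = ⊤)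
    (hcrys : P.IsCrystallographic) (hredu : P.IsReduced) (i j : ι)
    (hg : P.RootForm (P.root i) (P.root j) < 0) (hne : P.root i ≠ - P.root j) :
    ∃ k, P.root i + P.root j = P.root k := by
  set j' := P.reflectionPerm j j with hj'def
  have hj' : P.root j' = - P.root j := by
    rw [hj'def, P.root_reflectionPerm, P.reflection_apply_self]
  have hg' : 0 < P.RootForm (P.root i) (P.root j') := by
    rw [hj', map_neg]
    linarith
  have hne' : P.root i ≠ P.root j' := by rw [hj']; exact hne
  obtain ⟨k, hk⟩ := root_sub_mem P hP hcrys hredu i j' hg' hne'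
  refine ⟨k, ?_⟩
  rw [← hk, hj']
  abel

end RootFacts

section CruxSection

variable {ι M N : Type*} [Fintype ι] [AddCommGroup M] [Module ℚ M] [AddCommGroup N] [Module ℚ N]

private lemma multiset_sum_nonpos (s : Multiset ℚ) (h : ∀ x ∈ s, x ≤ 0) : s.sum ≤ 0 := by
  induction s using Multiset.induction with
  | empty => simp
  | cons a s ih =>
      rw [Multiset.sum_cons]
      have h1 := h a (Multiset.mem_cons_self a s)
      have h2 := ih (fun x hx => h x (Multiset.mem_cons_of_mem hx))
      linarith

-- bilinear multiset helpers
private lemma bilin_sum_left (g : M →ₗ[ℚ] M →ₗ[ℚ] ℚ) (s : Multiset M) (v : M) :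
    g s.sum v = (s.map (fun x => g x v)).sum := by
  induction s using Multiset.induction with
  | empty => simp
  | cons a s ih => simp [ih]

private lemma bilin_sum_right (g : M →ₗ[ℚ] M →ₗ[ℚ] ℚ) (v : M) (t : Multiset M) :
    g v t.sum = (t.map (fun y => g v y)).sum := by
  induction t using Multiset.induction with
  | empty => simp
  | cons a t ih => simp [ih]

private lemma bilin_pairs_nonpos (g : M →ₗ[ℚ] M →ₗ[ℚ] ℚ) (s t : Multiset M)
    (h : ∀ x ∈ s, ∀ y ∈ t, g x y ≤ 0) : g s.sum t.sum ≤ 0 := by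
  rw [bilin_sum_left]
  apply multiset_sum_nonpos
  intro z hz
  rcases Multiset.mem_map.mp hz with ⟨x, hx, rfl⟩
  rw [bilin_sum_right]
  apply multiset_sum_nonpos
  intro z' hz'
  rcases Multiset.mem_map.mp hz' with ⟨y, hy, rfl⟩
  exact h x hx y hy

private lemma bilin_pairs_nonneg (g : M →ₗ[ℚ] M →ₗ[ℚ] ℚ) (s t : Multiset M)
    (h : ∀ x ∈ s, ∀ y ∈ t, 0 ≤ g x y) : 0 ≤ g s.sum t.sum := by
  rw [bilin_sum_left]
  apply Multiset.sum_nonneg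
  intro z hz
  rcases Multiset.mem_map.mp hz with ⟨x, hx, rfl⟩
  rw [bilin_sum_right]
  apply Multiset.sum_nonneg
  intro z' hz'
  rcases Multiset.mem_map.mp hz' with ⟨y, hy, rfl⟩
  exact h x hx y hy

private lemma bilin_exists_neg (g : M →ₗ[ℚ] M →ₗ[ℚ] ℚ) (s t : Multiset M)
    (h : g s.sum t.sum < 0) : ∃ x ∈ s, ∃ y ∈ t, g x y < 0 := by
  by_contra hcon
  push_neg at hcon
  exact absurd (bilin_pairs_nonneg g s t hcon) (not_le.mpr h)

-- order helpers
private lemma rootLE_trans {P : Set M} {x y z : M} (h1 : rootLE P x y) (h2 : rootLE P y z) :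
    rootLE P x z := by
  have := AddSubmonoid.add_mem _ h1 h2
  simpa [rootLE, sub_add_sub_cancel'] using this

set_option maxHeartbeats 1000000 in
private theorem crux
    (Q : RootPairing ι ℚ M N) [Q.IsRootSystem]
    (hcrys : Q.IsCrystallographic) (hredu : Q.IsReduced)
    (pos sim : Set ι) (hsim : sim ⊆ pos)
    (hspan : ∀ i ∈ pos, Q.root i ∈ AddSubmonoid.closure (Q.root '' sim))
    (hdec : ∀ i : ι, i ∈ pos ∨ ∃ j ∈ pos, Q.root i = -Q.root j)
    (φ₁ : Module.Dual ℚ M) (hφ₁ : ∀ x ∈ Q.root '' sim, φ₁ x = 1)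
    (Γ : Set M) (hΓ : IsAntichainIn (Q.root '' sim) (Q.root '' pos) Γ)
    (A₀ B₀ : Set M) (hA₀ : A₀ ⊆ Γ) (hB₀ : B₀ ⊆ Γ) (hAB : ∀ x ∈ A₀, x ∉ B₀) :
    ∀ (AA CC : ℕ) (a d c : Multiset M),
    Multiset.card a = AA → Multiset.card c = CC →
    (∀ x ∈ a, x ∈ A₀) →
    (∀ x ∈ d, x ∈ Q.root '' pos ∧ ∃ δ ∈ B₀, rootLE (Q.root '' sim) δ x) →
    (∀ x ∈ c, x ∈ Q.root '' sim) →
    a.sum = d.sum + c.sum →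
    Multiset.card a = Multiset.card d →
    a ≠ 0 → False := by
  classical
  set P := Q with hPdef
  set simR : Set M := Q.root '' sim with hsimR
  set posR : Set M := Q.root '' pos with hposR
  have hPtop : P.rootSpan ℚ = ⊤ :=
    (RootPairing.IsRootSystem.span_root_eq_top : Submodule.span ℚ (Set.range Q.root) = ⊤)
  -- heights
  have hcl_ht : ∀ x ∈ AddSubmonoid.closure simR, ∃ nn : ℕ, φ₁ x = nn ∧ (nn = 0 → x = 0) := by
    intro x hx
    obtain ⟨s, hsmem, hssum⟩ := closure_multiset hx
    refine ⟨Multiset.card s, ?_, ?_⟩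
    · rw [← hssum, map_multiset_sum]
      have : s.map φ₁ = s.map (fun _ => (1:ℚ)) :=
        Multiset.map_congr rfl (fun y hy => hφ₁ y (hsmem y hy))
      rw [this, Multiset.map_const', Multiset.sum_replicate]
      simp
    · intro hc
      rw [Multiset.card_eq_zero] at hc
      rw [← hssum, hc]
      simp
  have hposR_cl : ∀ x ∈ posR, x ∈ AddSubmonoid.closure simR := by
    rintro x ⟨i, hi, rfl⟩
    exact hspan i hi
  have hht_pos : ∀ x ∈ posR, 1 ≤ φ₁ x := by
    intro x hx
    obtain ⟨i, hi, rfl⟩ := hx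
    obtain ⟨nn, h1, h2⟩ := hcl_ht _ (hspan i hi)
    have : nn ≠ 0 := fun h => P.ne_zero i (h2 h)
    rw [h1]
    exact_mod_cast Nat.one_le_iff_ne_zero.mpr this
  have hht_nonneg : ∀ x ∈ AddSubmonoid.closure simR, 0 ≤ φ₁ x := by
    intro x hx
    obtain ⟨nn, h1, _⟩ := hcl_ht x hx
    rw [h1]
    exact_mod_cast Nat.zero_le nn
  have hht_ne : ∀ x ∈ AddSubmonoid.closure simR, x ≠ 0 → 1 ≤ φ₁ x := by
    intro x hx hxne
    obtain ⟨nn, h1, h2⟩ := hcl_ht x hx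
    have : nn ≠ 0 := fun h => hxne (h2 h)
    rw [h1]
    exact_mod_cast Nat.one_le_iff_ne_zero.mpr this
  have hsimR_posR : simR ⊆ posR := Set.image_mono hsim
  -- vector-level: positive form value on two positive roots gives comparability
  have hpair_pos : ∀ x ∈ posR, ∀ y ∈ posR, 0 < P.RootForm x y → x ≠ y →
      rootLE simR y x ∨ rootLE simR x y := by
    rintro x ⟨i, hi, rfl⟩ y ⟨j, hj, rfl⟩ hg hne
    obtain ⟨k, hk⟩ := root_sub_mem P hPtop hcrys hredu i j hg hne
    rcases hdec k with hkpos | ⟨l, hl, hkl⟩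
    · left
      show P.root i - P.root j ∈ AddSubmonoid.closure simR
      rw [hk]
      exact hposR_cl _ ⟨k, hkpos, rfl⟩
    · right
      show P.root j - P.root i ∈ AddSubmonoid.closure simR
      have : P.root j - P.root i = P.root l := by
        rw [← neg_sub, hk, hkl]
        simp
      rw [this]
      exact hposR_cl _ ⟨l, hl, rfl⟩
  -- vector-level: negative form value on positive root and simple root gives a positive root sum
  have hpair_neg : ∀ x ∈ posR, ∀ y ∈ simR, P.RootForm x y < 0 → x + y ∈ posR := by
    rintro x hx y hy hg
    obtain ⟨i, hi, hix⟩ := hx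
    obtain ⟨s, hs, hsy⟩ := hy
    have hxne : x ≠ -y := by
      intro h
      have h1 : 1 ≤ φ₁ x := hht_pos x ⟨i, hi, hix⟩
      have h2 : φ₁ y = 1 := hφ₁ y ⟨s, hs, hsy⟩
      rw [h, map_neg, h2] at h1
      linarith
    subst hix hsy
    obtain ⟨k, hk⟩ := root_add_mem P hPtop hcrys hredu i s hg hxne
    rcases hdec k with hkpos | ⟨l, hl, hkl⟩
    · rw [hk]
      exact ⟨k, hkpos, rfl⟩
    · exfalso
      have hsum0 : P.root i + P.root s + P.root l = 0 := by
        rw [hk, hkl]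
        simp
      have h1 : 1 ≤ φ₁ (P.root i) := hht_pos _ ⟨i, hi, rfl⟩
      have h2 : 1 ≤ φ₁ (P.root s) := hht_pos _ ⟨s, hsim hs, rfl⟩
      have h3 : 1 ≤ φ₁ (P.root l) := hht_pos _ ⟨l, hl, rfl⟩
      have : φ₁ (P.root i + P.root s + P.root l) = 0 := by rw [hsum0]; simp
      rw [map_add, map_add] at this
      linarith
  -- the main descent
  intro AA
  induction AA using Nat.strong_induction_on with
  | _ AA IHA =>
  intro CC
  induction CC using Nat.strong_induction_on with
  | _ CC IHC =>
  intro a d c hcardA hcardC hadom hddom hcdom hvec hmass hane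
  have hA0 : 0 < Multiset.card a := Multiset.card_pos.mpr hane
  have hd0 : 0 < Multiset.card d := by omega
  have hdne : d ≠ 0 := by
    intro h
    rw [h] at hd0
    simp at hd0
  by_cases hpair : ∃ x ∈ a, ∃ y ∈ d, 0 < P.RootForm x y
  · obtain ⟨γ, hγa, ε, hεd, hgpos⟩ := hpair
    have hγA₀ : γ ∈ A₀ := hadom γ hγa
    have hγΓ : γ ∈ Γ := hA₀ hγA₀
    obtain ⟨hεpos, δ, hδB, hδε⟩ := hddom ε hεd
    have hγpos : γ ∈ posR := hΓ.1 hγΓ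
    have hδΓ : δ ∈ Γ := hB₀ hδB
    have hδγne : δ ≠ γ := fun h => hAB γ hγA₀ (h ▸ hδB)
    by_cases hγε : γ = ε
    · exact hΓ.2 δ hδΓ γ hγΓ hδγne (by rw [hγε]; exact hδε)
    · rcases hpair_pos γ hγpos ε hεpos hgpos hγε with hle | hle
      · exact hΓ.2 δ hδΓ γ hγΓ hδγne (rootLE_trans hδε hle)
      · -- M6 move
        obtain ⟨w, hwmem, hwsum⟩ := closure_multiset hle
        set a' := a.erase γ with ha'
        set d' := d.erase ε with hd'
        have hsum_a : a.sum = γ + a'.sum := by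
          rw [← Multiset.sum_cons, Multiset.cons_erase hγa]
        have hsum_d : d.sum = ε + d'.sum := by
          rw [← Multiset.sum_cons, Multiset.cons_erase hεd]
        by_cases ha'0 : a' = 0
        · -- the last move: contradiction via heights
          have hcard_a : Multiset.card a = 1 := by
            have h := congrArg Multiset.card (Multiset.cons_erase hγa).symm
            rw [Multiset.card_cons, ← ha', ha'0] at h
            simpa using h
          have hcard_d : Multiset.card d = 1 := by omega
          have hd_singleton : d = {ε} := by
            obtain ⟨x, hx⟩ := Multiset.card_eq_one.mp hcard_d
            rw [hx]
            rw [hx] at hεd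
            simp at hεd
            rw [hεd]
          have ha_singleton : a = {γ} := by
            obtain ⟨x, hx⟩ := Multiset.card_eq_one.mp hcard_a
            rw [hx]
            rw [hx] at hγa
            simp at hγa
            rw [hγa]
          rw [ha_singleton, hd_singleton] at hvec
          simp at hvec
          -- hvec : γ = ε + c.sum
          have hcs : φ₁ c.sum = (Multiset.card c : ℚ) := by
            rw [map_multiset_sum]
            have : c.map φ₁ = c.map (fun _ => (1:ℚ)) :=
              Multiset.map_congr rfl (fun y hy => hφ₁ y (hcdom y hy))
            rw [this, Multiset.map_const', Multiset.sum_replicate]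
            simp
          have hεγ : 1 ≤ φ₁ (ε - γ) := by
            apply hht_ne _ hle
            intro h
            apply hγε
            have : ε = γ := by
              have := sub_eq_zero.mp h
              exact this
            exact this.symm
          have h1 : φ₁ γ = φ₁ ε + φ₁ c.sum := by rw [hvec, map_add]
          have h2 : φ₁ ε - φ₁ γ ≥ 1 := by
            have : φ₁ (ε - γ) = φ₁ ε - φ₁ γ := by rw [map_sub]
            linarith [hεγ, this]
          have h3 : (0:ℚ) ≤ Multiset.card c := by positivity
          rw [hcs] at h1
          linarith
        · -- recurse with smaller a
          have hcard_a' : Multiset.card a' = AA - 1 := by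
            rw [ha', Multiset.card_erase_of_mem hγa, hcardA]
            rfl
          have hAA1 : 1 ≤ AA := by omega
          refine IHA (AA - 1) (by omega) (Multiset.card (c + w)) a' d' (c + w)
            hcard_a' rfl ?_ ?_ ?_ ?_ ?_ ha'0
          · intro x hx
            exact hadom x (Multiset.mem_of_mem_erase hx)
          · intro x hx
            exact hddom x (Multiset.mem_of_mem_erase hx)
          · intro x hx
            rcases Multiset.mem_add.mp hx with h | h
            · exact hcdom x h
            · exact hwmem x h
          · -- vector identity
            have : γ + a'.sum = γ + (d'.sum + (c + w).sum) := by
              rw [← hsum_a, hvec, hsum_d, Multiset.sum_add, hwsum]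
              abel
            exact add_left_cancel this
          · rw [ha', hd', Multiset.card_erase_of_mem hγa, Multiset.card_erase_of_mem hεd, hmass]
      -- end M6
  · -- no positive pair: M1 move
    push_neg at hpair
    have hαle : P.RootForm a.sum d.sum ≤ 0 := bilin_pairs_nonpos _ _ _ hpair
    have hwne : d.sum ≠ 0 := by
      intro h
      have hsum : φ₁ d.sum = (d.map φ₁).sum := map_multiset_sum φ₁ d
      have hge : (Multiset.card d : ℚ) ≤ (d.map φ₁).sum := by
        have : ∀ z ∈ d.map φ₁, 1 ≤ z := by
          intro z hz
          rcases Multiset.mem_map.mp hz with ⟨x, hx, rfl⟩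
          exact hht_pos x (hddom x hx).1
        have h1 : Multiset.card (d.map φ₁) • (1:ℚ) ≤ (d.map φ₁).sum :=
          Multiset.card_nsmul_le_sum this
        simpa using h1
      rw [h] at hsum
      simp at hsum
      rw [← hsum] at hge
      have : (0:ℚ) < Multiset.card d := by exact_mod_cast hd0
      linarith
    have hww : 0 < P.RootForm d.sum d.sum := by
      apply P.rootForm_pos_of_ne_zero _ hwne
      rw [hPtop]
      trivial
    haveI := P.rootForm_symmetric
    have hsymm : P.RootForm d.sum a.sum ≤ 0 := by
      rw [← LinearMap.isSymm_def.mp P.rootForm_symmetric a.sum d.sum, RingHom.id_apply]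
      exact hαle
    have hwq : P.RootForm d.sum c.sum < 0 := by
      have : P.RootForm d.sum a.sum = P.RootForm d.sum d.sum + P.RootForm d.sum c.sum := by
        rw [hvec, map_add]
      linarith
    obtain ⟨ε, hεd, β, hβc, hεβ⟩ := bilin_exists_neg _ _ _ hwq
    obtain ⟨hεpos, δ, hδB, hδε⟩ := hddom ε hεd
    have hβsim : β ∈ simR := hcdom β hβc
    have hεβpos : ε + β ∈ posR := hpair_neg ε hεpos β hβsim hεβ
    set d' := (ε + β) ::ₘ d.erase ε with hd'
    set c' := c.erase β with hc'
    have hsum_d : d.sum = ε + (d.erase ε).sum := by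
      rw [← Multiset.sum_cons, Multiset.cons_erase hεd]
    have hsum_c : c.sum = β + c'.sum := by
      rw [← Multiset.sum_cons, Multiset.cons_erase hβc]
    have hCC1 : 1 ≤ CC := by
      have : 0 < Multiset.card c := Multiset.card_pos.mpr (by
        intro h
        rw [h] at hβc
        simp at hβc)
      omega
    refine IHC (CC - 1) (by omega) a d' c' hcardA ?_ hadom ?_ ?_ ?_ ?_ hane
    · rw [hc', Multiset.card_erase_of_mem hβc, hcardC]
      rfl
    · intro x hx
      rcases Multiset.mem_cons.mp hx with rfl | hx
      · refine ⟨hεβpos, δ, hδB, rootLE_trans hδε ?_⟩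
        show (ε + β) - ε ∈ AddSubmonoid.closure simR
        have : (ε + β) - ε = β := by abel
        rw [this]
        exact AddSubmonoid.subset_closure hβsim
      · exact hddom x (Multiset.mem_of_mem_erase hx)
    · intro x hx
      exact hcdom x (Multiset.mem_of_mem_erase hx)
    · rw [hd']
      rw [Multiset.sum_cons, hvec, hsum_d, hsum_c]
      abel
    · have h1 : Multiset.card d' = Multiset.card d := by
        rw [hd', Multiset.card_cons, Multiset.card_erase_of_mem hεd]
        have := Nat.succ_pred_eq_of_pos hd0
        omega
      omega

end CruxSection


section AssemblyHelpers

variable {M : Type*} [AddCommGroup M]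

private lemma ms_decomp [DecidableEq M] {β : Type*} [AddCommMonoid β] (E : Finset M) (s : Multiset M)
    (hs : ∀ x ∈ s, x ∈ E) (F : M → β) :
    (s.map F).sum = ∑ e ∈ E, (s.count e) • F e := by
  classical
  induction s using Multiset.induction with
  | empty => simp
  | cons a s ih =>
      have haE : a ∈ E := hs a (Multiset.mem_cons_self a s)
      have ihs := ih (fun x hx => hs x (Multiset.mem_cons_of_mem hx))
      rw [Multiset.map_cons, Multiset.sum_cons, ihs]
      have hstep : ∀ e ∈ E, Multiset.count e (a ::ₘ s) • F e
          = Multiset.count e s • F e + (if e = a then F e else 0) := by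
        intro e _
        rw [Multiset.count_cons, add_smul, ite_smul, one_smul, zero_smul]
      rw [Finset.sum_congr rfl hstep, Finset.sum_add_distrib, Finset.sum_ite_eq' E a F,
        if_pos haE]
      abel

private lemma multiset_sum_finsum {α β : Type*} [AddCommMonoid β] (s : Finset α)
    (f : α → Multiset β) : (∑ i ∈ s, f i).sum = ∑ i ∈ s, (f i).sum := by
  classical
  induction s using Finset.induction with
  | empty => simp
  | insert _ _ hnotmem ih =>
      rw [Finset.sum_insert hnotmem, Finset.sum_insert hnotmem, Multiset.sum_add, ih]

private lemma multiset_card_finsum {α β : Type*} (s : Finset α)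
    (f : α → Multiset β) : Multiset.card (∑ i ∈ s, f i) = ∑ i ∈ s, Multiset.card (f i) := by
  classical
  induction s using Finset.induction with
  | empty => simp
  | insert _ _ hnotmem ih =>
      rw [Finset.sum_insert hnotmem, Finset.sum_insert hnotmem, Multiset.card_add, ih]

private lemma toNat_smul_sub (n : ℤ) (x : M) :
    (n.toNat : ℤ) • x - ((-n).toNat : ℤ) • x = n • x := by
  rw [← sub_smul]
  congr 1
  exact Int.toNat_sub_toNat_neg n

private lemma rat_int_scale (q : ℚ) (D : ℕ) (hD : (q.den : ℕ) ∣ D) :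
    ∃ m : ℤ, (m : ℚ) = q * D := by
  obtain ⟨t, ht⟩ := hD
  refine ⟨q.num * t, ?_⟩
  have hq : (q.num : ℚ) = q * q.den := (Rat.mul_den_eq_num q).symm
  rw [ht]
  push_cast
  rw [hq]
  ring

private lemma rat_den_pos_prod {K : Type*} [Fintype K] (z : K → ℚ) :
    ∀ k : K, ∃ m : ℤ, (m : ℚ) = z k * (∏ k', (z k').den : ℕ) :=
  fun k => rat_int_scale (z k) _ (Finset.dvd_prod_of_mem (fun k' => (z k').den)
    (Finset.mem_univ k))

end AssemblyHelpers

set_option maxHeartbeats 2000000 in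
/-- Let `Γ ⊆ Δ⁺` be a non-empty antichain in the positive roots of a finite
root system.  Then there exist `H` in the Cartan subalgebra (an element of the dual space of
the root space) and a positive integer `n` such that `α(H)` is a positive integer for every
simple root `α` and `γ(H) = n` for every `γ ∈ Γ`. -/
theorem antichain_on_affine_hyperplane
    {ι M N : Type*} [Fintype ι] [AddCommGroup M] [Module ℚ M] [AddCommGroup N] [Module ℚ N]
    (Q : RootPairing ι ℚ M N) [Q.IsRootSystem]
    (hcrys : Q.IsCrystallographic) (hredu : Q.IsReduced)
    (pos sim : Set ι) (hsim : sim ⊆ pos)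
    (hspan : ∀ i ∈ pos, Q.root i ∈ AddSubmonoid.closure (Q.root '' sim))
    (hdec : ∀ i : ι, i ∈ pos ∨ ∃ j ∈ pos, Q.root i = -Q.root j)
    (hind : LinearIndependent ℚ (fun s : sim => Q.root s))
    (Γ : Set M) (hΓ : IsAntichainIn (Q.root '' sim) (Q.root '' pos) Γ)
    (hΓne : Γ.Nonempty) :
    ∃ (φ : Module.Dual ℚ M) (n : ℕ), 0 < n ∧
      (∀ s ∈ sim, ∃ k : ℕ, 0 < k ∧ φ (Q.root s) = k) ∧
      ∀ γ ∈ Γ, φ γ = n := by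
  classical
  have hΓpos : Γ ⊆ Q.root '' pos := hΓ.1
  have hposRfin : (Q.root '' pos).Finite :=
    (Set.finite_range Q.root).subset (Set.image_subset_range _ _)
  have hΓfin : Γ.Finite := hposRfin.subset hΓpos
  have hsimRfin : (Q.root '' sim).Finite :=
    (Set.finite_range Q.root).subset (Set.image_subset_range _ _)
  set EF : Finset M := hsimRfin.toFinset with hEFdef
  set KF : Finset M := hΓfin.toFinset with hKFdef
  have hEFmem : ∀ {x : M}, x ∈ EF ↔ x ∈ Q.root '' sim := fun {x} => Set.Finite.mem_toFinset _
  have hKFmem : ∀ {x : M}, x ∈ KF ↔ x ∈ Γ := fun {x} => Set.Finite.mem_toFinset _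
  -- height functional
  obtain ⟨φ₁, hφ₁⟩ := exists_dual_on_sim Q sim hind (fun _ => 1)
  have hφ₁' : ∀ x ∈ Q.root '' sim, φ₁ x = 1 := by
    rintro x ⟨s, hs, rfl⟩
    exact hφ₁ s hs
  -- coordinates
  have hcoord : ∀ γ, γ ∈ KF → ∃ s : Multiset M, (∀ y ∈ s, y ∈ Q.root '' sim) ∧ s.sum = γ := by
    intro γ hγ
    obtain ⟨i, hi, rfl⟩ := hΓpos (hKFmem.mp hγ)
    exact closure_multiset (hspan i hi)
  choose! mm hmm1 hmm2 using hcoord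
  obtain ⟨γ₀, hγ₀Γ⟩ := hΓne
  have hγ₀K : γ₀ ∈ KF := hKFmem.mpr hγ₀Γ
  set cnt : M → M → ℕ := fun γ e => Multiset.count e (mm γ) with hcntdef
  -- decomposition of linear functionals on elements of KF
  have hdecomp : ∀ γ ∈ KF, ∀ φ : Module.Dual ℚ M,
      φ γ = ∑ e ∈ EF, (cnt γ e : ℚ) * φ e := by
    intro γ hγ φ
    have h1 : φ γ = ((mm γ).map φ).sum := by
      conv_lhs => rw [← hmm2 γ hγ]
      rw [map_multiset_sum]
    rw [h1, ms_decomp EF (mm γ) (fun x hx => hEFmem.mpr (hmm1 γ hγ x hx)) φ]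
    exact Finset.sum_congr rfl fun e _ => by rw [nsmul_eq_mul]
  have hvecdecomp : ∀ γ ∈ KF, γ = ∑ e ∈ EF, (cnt γ e) • e := by
    intro γ hγ
    have h1 : ((mm γ).map (id : M → M)).sum = ∑ e ∈ EF, (Multiset.count e (mm γ)) • (id e) :=
      ms_decomp EF (mm γ) (fun x hx => hEFmem.mpr (hmm1 γ hγ x hx)) id
    rw [Multiset.map_id] at h1
    conv_lhs => rw [← hmm2 γ hγ]
    exact h1
  set r : {x // x ∈ KF} → {x // x ∈ EF} → ℚ :=
    fun k e => (cnt k e : ℚ) - (cnt γ₀ e : ℚ) with hrdef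
  -- no dual certificate, thanks to crux
  have hnocert : ∀ u : {x // x ∈ KF} → ℚ,
      (∀ e, 0 ≤ ∑ k, u k * r k e) → ∀ e, ∑ k, u k * r k e = 0 := by
    intro u hunn
    by_contra hcon
    push_neg at hcon
    obtain ⟨ep, hep⟩ := hcon
    have heppos : 0 < ∑ k, u k * r k ep := lt_of_le_of_ne (hunn ep) (Ne.symm hep)
    set k₀ : {x // x ∈ KF} := ⟨γ₀, hγ₀K⟩ with hk₀
    set z : {x // x ∈ KF} → ℚ := fun k => u k - (if k = k₀ then (∑ k', u k') else 0) with hzdef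
    have hzsum : ∑ k, z k = 0 := by
      simp only [hzdef]
      rw [Finset.sum_sub_distrib, Finset.sum_ite_eq' Finset.univ k₀ (fun _ => ∑ k', u k'),
        if_pos (Finset.mem_univ k₀)]
      ring
    have hzcnt : ∀ e : {x // x ∈ EF}, ∑ k, z k * (cnt k e : ℚ) = ∑ k, u k * r k e := by
      intro e
      have hstep : ∀ k : {x // x ∈ KF}, z k * (cnt (k:M) (e:M) : ℚ)
          = u k * (cnt (k:M) (e:M) : ℚ)
            - (if k = k₀ then (∑ k', u k') * (cnt (k:M) (e:M) : ℚ) else 0) := by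
        intro k
        by_cases h : k = k₀ <;> simp [hzdef, h] <;> ring
      have hstep2 : ∀ k : {x // x ∈ KF}, u k * r k e
          = u k * (cnt (k:M) (e:M) : ℚ) - u k * (cnt γ₀ (e:M) : ℚ) := by
        intro k
        simp only [hrdef]
        ring
      calc ∑ k, z k * (cnt (k:M) (e:M):ℚ)
          = ∑ k, (u k * (cnt (k:M) (e:M):ℚ)
              - (if k = k₀ then (∑ k', u k') * (cnt (k:M) (e:M):ℚ) else 0)) :=
            Finset.sum_congr rfl fun k _ => hstep k
        _ = (∑ k, u k * (cnt (k:M) (e:M):ℚ)) - (∑ k', u k') * (cnt γ₀ (e:M) : ℚ) := by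
            rw [Finset.sum_sub_distrib, Finset.sum_ite_eq' Finset.univ k₀
              (fun k => (∑ k', u k') * (cnt (k:M) (e:M) : ℚ)), if_pos (Finset.mem_univ k₀)]
        _ = ∑ k, u k * r k e := by
            rw [Finset.sum_congr rfl (fun k _ => hstep2 k), Finset.sum_sub_distrib,
              ← Finset.sum_mul]
    -- scale to integers
    choose zz hzz using rat_den_pos_prod z
    set D : ℕ := ∏ k, (z k).den with hDdef
    have hDpos : 0 < D := Finset.prod_pos (fun k _ => (z k).den_pos)
    have hzzsum : ∑ k, zz k = 0 := by
      have : ((∑ k, zz k : ℤ) : ℚ) = (∑ k, z k) * D := by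
        push_cast
        rw [Finset.sum_mul]
        exact Finset.sum_congr rfl fun k _ => hzz k
      rw [hzsum, zero_mul] at this
      exact_mod_cast this
    set Y : {x // x ∈ EF} → ℤ := fun e => ∑ k, zz k * (cnt (k:M) (e:M) : ℤ) with hYdef
    have hYval : ∀ e, (Y e : ℚ) = (∑ k, u k * r k e) * D := by
      intro e
      rw [hYdef]
      push_cast
      rw [← hzcnt e, Finset.sum_mul]
      exact Finset.sum_congr rfl fun k _ => by rw [hzz k]; ring
    have hYnn : ∀ e, 0 ≤ Y e := by
      intro e
      have : (0:ℚ) ≤ (Y e : ℚ) := by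
        rw [hYval e]
        have := hunn e
        positivity
      exact_mod_cast this
    have hYp : 0 < Y ep := by
      have : (0:ℚ) < (Y ep : ℚ) := by
        rw [hYval ep]
        have : (0:ℚ) < (D:ℚ) := by exact_mod_cast hDpos
        positivity
      exact_mod_cast this
    -- the multisets
    set aM : Multiset M := ∑ k, Multiset.replicate (zz k).toNat (k:M) with haM
    set dM : Multiset M := ∑ k, Multiset.replicate ((- zz k).toNat) (k:M) with hdM
    set cM : Multiset M := ∑ e, Multiset.replicate (Y e).toNat (e:M) with hcM
    set A₀ : Set M := {x | ∃ hx : x ∈ KF, 0 < zz ⟨x, hx⟩} with hA₀def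
    set B₀ : Set M := {x | ∃ hx : x ∈ KF, zz ⟨x, hx⟩ < 0} with hB₀def
    have hA₀Γ : A₀ ⊆ Γ := by
      rintro x ⟨hx, _⟩
      exact hKFmem.mp hx
    have hB₀Γ : B₀ ⊆ Γ := by
      rintro x ⟨hx, _⟩
      exact hKFmem.mp hx
    have hABdisj : ∀ x ∈ A₀, x ∉ B₀ := by
      rintro x ⟨hx1, hpos'⟩ ⟨hx2, hneg'⟩
      have : (⟨x, hx1⟩ : {x' // x' ∈ KF}) = ⟨x, hx2⟩ := Subtype.ext rfl
      rw [this] at hpos'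
      linarith
    have haMmem : ∀ x ∈ aM, x ∈ A₀ := by
      intro x hx
      rw [haM] at hx
      rcases Multiset.mem_sum.mp hx with ⟨k, _, hk⟩
      rw [Multiset.mem_replicate] at hk
      obtain ⟨hne0, rfl⟩ := hk
      refine ⟨k.2, ?_⟩
      have h1 : 0 < zz k := by
        by_contra hc
        push_neg at hc
        exact hne0 (Int.toNat_eq_zero.mpr hc)
      have : (⟨(k:M), k.2⟩ : {x' // x' ∈ KF}) = k := Subtype.ext rfl
      rw [this]
      exact h1
    have hdMmem : ∀ x ∈ dM, x ∈ Q.root '' pos ∧ ∃ δ ∈ B₀, rootLE (Q.root '' sim) δ x := by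
      intro x hx
      rw [hdM] at hx
      rcases Multiset.mem_sum.mp hx with ⟨k, _, hk⟩
      rw [Multiset.mem_replicate] at hk
      obtain ⟨hne0, rfl⟩ := hk
      have h1 : zz k < 0 := by
        by_contra hc
        push_neg at hc
        exact hne0 (Int.toNat_eq_zero.mpr (by linarith))
      have hmemB : (k:M) ∈ B₀ := by
        refine ⟨k.2, ?_⟩
        have : (⟨(k:M), k.2⟩ : {x' // x' ∈ KF}) = k := Subtype.ext rfl
        rw [this]
        exact h1
      refine ⟨hΓpos (hKFmem.mp k.2), (k:M), hmemB, ?_⟩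
      show (k:M) - (k:M) ∈ AddSubmonoid.closure (Q.root '' sim)
      rw [sub_self]
      exact AddSubmonoid.zero_mem _
    have hcMmem : ∀ x ∈ cM, x ∈ Q.root '' sim := by
      intro x hx
      rw [hcM] at hx
      rcases Multiset.mem_sum.mp hx with ⟨e, _, he⟩
      rw [Multiset.mem_replicate] at he
      obtain ⟨_, rfl⟩ := he
      exact hEFmem.mp e.2
    -- sums
    have haSum : aM.sum = ∑ k, ((zz k).toNat) • (k:M) := by
      rw [haM, multiset_sum_finsum]
      exact Finset.sum_congr rfl fun k _ => Multiset.sum_replicate _ _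
    have hdSum : dM.sum = ∑ k, (((- zz k).toNat)) • (k:M) := by
      rw [hdM, multiset_sum_finsum]
      exact Finset.sum_congr rfl fun k _ => Multiset.sum_replicate _ _
    have hcSum : cM.sum = ∑ e, ((Y e).toNat) • (e:M) := by
      rw [hcM, multiset_sum_finsum]
      exact Finset.sum_congr rfl fun e _ => Multiset.sum_replicate _ _
    have hZid : ∑ k, (zz k) • ((k:M)) = ∑ e, (Y e) • ((e:M)) := by
      have hterm : ∀ k : {x // x ∈ KF}, (zz k) • ((k:M))
          = ∑ e ∈ EF, (zz k * (cnt (k:M) e : ℤ)) • e := by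
        intro k
        conv_lhs => rw [hvecdecomp (k:M) k.2]
        rw [Finset.smul_sum]
        refine Finset.sum_congr rfl fun e _ => ?_
        rw [← natCast_zsmul e (cnt (k:M) e), smul_smul]
      rw [Finset.sum_congr rfl (fun k _ => hterm k), Finset.sum_comm]
      rw [← Finset.sum_coe_sort EF (fun e => ∑ k, (zz k * (cnt (k:M) e : ℤ)) • e)]
      refine Finset.sum_congr rfl fun e _ => ?_
      rw [← Finset.sum_smul]
    have hvecinv : aM.sum = dM.sum + cM.sum := by
      have h1 : aM.sum - dM.sum = ∑ k, (zz k) • ((k:M)) := by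
        rw [haSum, hdSum, ← Finset.sum_sub_distrib]
        refine Finset.sum_congr rfl fun k _ => ?_
        rw [← natCast_zsmul ((k:M)) ((zz k).toNat), ← natCast_zsmul ((k:M)) (((- zz k).toNat))]
        exact toNat_smul_sub (zz k) (k:M)
      have h2 : cM.sum = ∑ e, (Y e) • ((e:M)) := by
        rw [hcSum]
        refine Finset.sum_congr rfl fun e _ => ?_
        rw [← natCast_zsmul ((e:M)) ((Y e).toNat), Int.toNat_of_nonneg (hYnn e)]
      have h3 : aM.sum - dM.sum = cM.sum := by rw [h1, hZid, ← h2]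
      have h4 := sub_eq_iff_eq_add.mp h3
      rw [h4, add_comm]
    have hcards : Multiset.card aM = Multiset.card dM := by
      rw [haM, hdM, multiset_card_finsum, multiset_card_finsum]
      simp only [Multiset.card_replicate]
      have h5 : ((∑ k, (zz k).toNat : ℕ) : ℤ) = ((∑ k, (- zz k).toNat : ℕ) : ℤ) := by
        push_cast
        rw [← sub_eq_zero, ← Finset.sum_sub_distrib,
          Finset.sum_congr rfl (fun k _ => Int.toNat_sub_toNat_neg (zz k))]
        exact hzzsum
      exact_mod_cast h5
    have hak : ∃ k, 0 < zz k := by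
      by_contra hcon2
      push_neg at hcon2
      have hYle : Y ep ≤ 0 := by
        rw [hYdef]
        apply Finset.sum_nonpos
        intro k _
        have h1 := hcon2 k
        have h2 : (0:ℤ) ≤ (cnt (k:M) (ep:M) : ℤ) := Int.natCast_nonneg _
        nlinarith
      linarith [hYp]
    obtain ⟨kp, hkp⟩ := hak
    have hane : aM ≠ 0 := by
      intro h0
      have hmem : (kp:M) ∈ aM := by
        rw [haM]
        refine Multiset.mem_sum.mpr ⟨kp, Finset.mem_univ kp, ?_⟩
        rw [Multiset.mem_replicate]
        refine ⟨?_, rfl⟩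
        intro h
        have := Int.toNat_eq_zero.mp h
        linarith
      rw [h0] at hmem
      exact absurd hmem (Multiset.notMem_zero _)
    exact crux Q hcrys hredu pos sim hsim hspan hdec φ₁ hφ₁' Γ hΓ A₀ B₀ hA₀Γ hB₀Γ hABdisj
      (Multiset.card aM) (Multiset.card cM) aM dM cM rfl rfl haMmem hdMmem hcMmem hvecinv
      hcards hane
  -- Stiemke gives a positive rational solution
  obtain ⟨cQ, hcQpos, hcQeq⟩ := stiemke
    (fun L x hx ε hε => density_aux L.length L rfl x hx ε hε)
    (fun L x hx ε hε => density_aux L.length L rfl x hx ε hε) r hnocert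
  choose cN hcN using rat_den_pos_prod cQ
  set D₂ : ℕ := ∏ e, (cQ e).den with hD₂def
  have hD₂pos : 0 < D₂ := Finset.prod_pos (fun e _ => (cQ e).den_pos)
  have hcNpos : ∀ e, 0 < cN e := by
    intro e
    have h1 : (0:ℚ) < (cN e : ℚ) := by
      rw [hcN e]
      have h2 : (0:ℚ) < (D₂:ℚ) := by exact_mod_cast hD₂pos
      exact mul_pos (hcQpos e) h2
    exact_mod_cast h1
  set nZ : ℤ := ∑ e : {x // x ∈ EF}, (cnt γ₀ (e:M) : ℤ) * cN e with hnZdef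
  have hmmne : mm γ₀ ≠ 0 := by
    intro h0
    have h1 := hmm2 γ₀ hγ₀K
    rw [h0] at h1
    simp at h1
    obtain ⟨i, hi, hroot⟩ := hΓpos hγ₀Γ
    exact Q.ne_zero i (by rw [hroot, ← h1])
  obtain ⟨y₀, hy₀⟩ := Multiset.exists_mem_of_ne_zero hmmne
  have hy₀E : y₀ ∈ EF := hEFmem.mpr (hmm1 γ₀ hγ₀K y₀ hy₀)
  have hnZpos : 0 < nZ := by
    rw [hnZdef]
    apply Finset.sum_pos'
    · intro e _
      exact mul_nonneg (Int.natCast_nonneg _) (le_of_lt (hcNpos e))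
    · refine ⟨⟨y₀, hy₀E⟩, Finset.mem_univ _, ?_⟩
      have h1 : 0 < cnt γ₀ y₀ := Multiset.count_pos.mpr hy₀
      have h2 : (0:ℤ) < (cnt γ₀ y₀ : ℤ) := by exact_mod_cast h1
      exact mul_pos h2 (hcNpos ⟨y₀, hy₀E⟩)
  set nn : ℕ := nZ.toNat with hnn
  set cfun : M → ℚ := fun x => if hx : x ∈ EF then ((cN ⟨x, hx⟩ : ℤ) : ℚ) else 0 with hcfun
  obtain ⟨φ, hφ⟩ := exists_dual_on_sim Q sim hind cfun
  refine ⟨φ, nn, ?_, ?_, ?_⟩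
  · rw [hnn]
    omega
  · intro s hs
    have hsE : Q.root s ∈ EF := hEFmem.mpr ⟨s, hs, rfl⟩
    refine ⟨(cN ⟨Q.root s, hsE⟩).toNat, ?_, ?_⟩
    · have := hcNpos ⟨Q.root s, hsE⟩
      omega
    · rw [hφ s hs]
      simp only [hcfun]
      rw [dif_pos hsE]
      have h2 : ((cN ⟨Q.root s, hsE⟩).toNat : ℤ) = cN ⟨Q.root s, hsE⟩ :=
        Int.toNat_of_nonneg (le_of_lt (hcNpos _))
      exact_mod_cast congrArg (fun m : ℤ => (m : ℚ)) h2.symm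
  · intro γ hγΓ'
    have hγK : γ ∈ KF := hKFmem.mpr hγΓ'
    have h1 := hdecomp γ hγK φ
    have hφE : ∀ e ∈ EF, φ e = cfun e := by
      intro e he
      obtain ⟨s, hs, rfl⟩ := hEFmem.mp he
      exact hφ s hs
    have h2 : φ γ = ∑ e ∈ EF, (cnt γ e : ℚ) * cfun e := by
      rw [h1]
      exact Finset.sum_congr rfl fun e he => by rw [hφE e he]
    have h3 : ∑ e ∈ EF, (cnt γ e : ℚ) * cfun e
        = ∑ e : {x // x ∈ EF}, (cnt γ (e:M) : ℚ) * ((cN e : ℤ):ℚ) := by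
      rw [← Finset.sum_coe_sort EF (fun e => (cnt γ e : ℚ) * cfun e)]
      refine Finset.sum_congr rfl fun e _ => ?_
      congr 1
      simp only [hcfun]
      rw [dif_pos e.2]
    have h4 : ∑ e : {x // x ∈ EF}, (cnt γ (e:M):ℚ) * ((cN e:ℤ):ℚ)
        = (∑ e : {x // x ∈ EF}, (cnt γ (e:M):ℚ) * cQ e) * D₂ := by
      rw [Finset.sum_mul]
      refine Finset.sum_congr rfl fun e _ => ?_
      rw [hcN e]
      ring
    have h5 : ∑ e : {x // x ∈ EF}, (cnt γ (e:M):ℚ) * cQ e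
        = ∑ e : {x // x ∈ EF}, (cnt γ₀ (e:M):ℚ) * cQ e := by
      have h6 := hcQeq ⟨γ, hγK⟩
      have h7 : ∑ e : {x // x ∈ EF}, ((cnt γ (e:M):ℚ) * cQ e - (cnt γ₀ (e:M):ℚ) * cQ e) = 0 := by
        rw [← h6]
        refine Finset.sum_congr rfl fun e _ => ?_
        simp only [hrdef]
        ring
      rw [Finset.sum_sub_distrib] at h7
      linarith
    have h8 : ((nZ:ℤ):ℚ) = (∑ e : {x // x ∈ EF}, (cnt γ₀ (e:M):ℚ) * cQ e) * D₂ := by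
      rw [hnZdef]
      push_cast
      rw [Finset.sum_mul]
      refine Finset.sum_congr rfl fun e _ => ?_
      rw [hcN e]
      ring
    have h9 : ((nn:ℕ):ℚ) = ((nZ:ℤ):ℚ) := by
      rw [hnn]
      exact_mod_cast congrArg (fun m : ℤ => (m:ℚ)) (Int.toNat_of_nonneg (le_of_lt hnZpos))
    rw [h2, h3, h4, h5, ← h8, h9]
end

section
/- Let γ, γ′ be two non-comparable positive roots of a finite root system with simple roots α₁,…,α_ℓ. Then there exists H in the Cartan subalgebra and a positive integer n with α_i(H) ∈ ℕ* for all i and γ(H) = γ′(H) = n. Concretely, writing γ = Σ c_i α_i, γ′ = Σ c′_i α_i, with I₊ = {i : c_i > c′_i}, I₀ = {i : c_i = c′_i}, I₋ = {i : c_i < c′_i}, c₊ = Σ_{i∈I₊} c_i, c′₊ = Σ_{i∈I₊} c′_i, c₋ = Σ_{i∈I₋} c_i, c′₋ = Σ_{i∈I₋} c′_i, c = Σ_{i∈I₀} c_i, the element H = Σ_{i∈I₊}(c′₋ − c₋)H_i + Σ_{i∈I₋}(c₊ − c′₊)H_i + Σ_{i∈I₀} H_i with n = c′₋c₊ − c₋c′₊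 + c works. -/
open Finset in
/-- Let `γ, γ′` be two non-comparable positive roots (nonnegative integer
combinations `γ = Σ c_i α_i`, `γ′ = Σ c′_i α_i` of the simple roots `α_i = B i`, which form a
basis of the Cartan dual, with dual basis `H_i = B.coord i`).  Then there is an `H` in the
Cartan subalgebra and a positive integer `n` with `α_i(H) ∈ ℕ*` for all `i` and
`γ(H) = γ′(H) = n`; concretely `H = Σ_{i∈I₊}(c′₋ − c₋)H_i + Σ_{i∈I₋}(c₊ − c′₊)H_i +
Σ_{i∈I₀} H_i` and `n = c′₋c₊ − c₋c′₊ + c` work. -/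
theorem noncomparable_pair_on_affine_hyperplane
    {ι M : Type*} [Fintype ι] [DecidableEq ι] [AddCommGroup M] [Module ℚ M]
    (B : Module.Basis ι ℚ M)
    (c c' : ι → ℕ) (γ γ' : M)
    (hγ : γ = ∑ i, (c i : ℚ) • B i) (hγ' : γ' = ∑ i, (c' i : ℚ) • B i)
    (hdist : γ ≠ γ')
    -- `γ` and `γ′` are non-comparable
    (hnc : ¬ rootLE (Set.range ⇑B) γ γ' ∧ ¬ rootLE (Set.range ⇑B) γ' γ)
    -- the index sets `I₊`, `I₀`, `I₋` and the sums `c₊`, `c′₊`, `c₋`, `c′₋`, `c`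
    (Ip I0 Im : Finset ι)
    (hIp : Ip = Finset.univ.filter fun i => c' i < c i)
    (hI0 : I0 = Finset.univ.filter fun i => c i = c' i)
    (hIm : Im = Finset.univ.filter fun i => c i < c' i)
    (cp cp' cm cm' c0 : ℕ)
    (hcp : cp = ∑ i ∈ Ip, c i) (hcp' : cp' = ∑ i ∈ Ip, c' i)
    (hcm : cm = ∑ i ∈ Im, c i) (hcm' : cm' = ∑ i ∈ Im, c' i)
    (hc0 : c0 = ∑ i ∈ I0, c i)
    -- the concrete element `H` of the Cartan subalgebra
    (φ : Module.Dual ℚ M)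
    (hφ : φ = (∑ i ∈ Ip, ((cm' : ℚ) - (cm : ℚ)) • B.coord i)
        + (∑ i ∈ Im, ((cp : ℚ) - (cp' : ℚ)) • B.coord i)
        + ∑ i ∈ I0, B.coord i) :
    -- abstract existence
    (∃ (ψ : Module.Dual ℚ M) (n : ℕ), 0 < n ∧
      (∀ i : ι, ∃ k : ℕ, 0 < k ∧ ψ (B i) = k) ∧ ψ γ = n ∧ ψ γ' = n) ∧
    -- the concrete pair `(H, n)` works
    (∀ i : ι, ∃ k : ℕ, 0 < k ∧ φ (B i) = k) ∧
    φ γ = (cm' : ℚ) * cp - (cm : ℚ) * cp' + c0 ∧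
    φ γ' = (cm' : ℚ) * cp - (cm : ℚ) * cp' + c0 ∧
    ∃ n : ℕ, 0 < n ∧ (n : ℚ) = (cm' : ℚ) * cp - (cm : ℚ) * cp' + c0 := by
  -- nonemptiness of Ip and Im
  have hmem : ∀ (d d' : ι → ℕ), (∀ i, d i ≤ d' i) →
      (∑ i, (d' i : ℚ) • B i) - (∑ i, (d i : ℚ) • B i)
        ∈ AddSubmonoid.closure (Set.range ⇑B) := by
    intro d d' hle
    have h : (∑ i, (d' i : ℚ) • B i) - (∑ i, (d i : ℚ) • B i)
        = ∑ i, ((d' i - d i : ℕ) : ℚ) • B i := by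
      rw [← Finset.sum_sub_distrib]
      refine Finset.sum_congr rfl fun i _ => ?_
      rw [← sub_smul]
      congr 1
      push_cast [Nat.cast_sub (hle i)]
      ring
    rw [h]
    have hb : ∀ (n : ℕ) (v : M), v ∈ AddSubmonoid.closure (Set.range ⇑B) →
        (n : ℚ) • v ∈ AddSubmonoid.closure (Set.range ⇑B) := by
      intro n v hv
      rw [Nat.cast_smul_eq_nsmul ℚ n v]
      exact AddSubmonoid.nsmul_mem _ hv n
    exact AddSubmonoid.sum_mem (AddSubmonoid.closure (Set.range ⇑B))
      fun i _ => hb _ _ (AddSubmonoid.subset_closure (Set.mem_range_self i))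
  have hIpne : Ip.Nonempty := by
    by_contra h
    apply hnc.1
    rw [rootLE, hγ, hγ']
    refine hmem c c' fun i => ?_
    by_contra hlt
    exact h ⟨i, by simp [hIp]; omega⟩
  have hImne : Im.Nonempty := by
    by_contra h
    apply hnc.2
    rw [rootLE, hγ, hγ']
    refine hmem c' c fun i => ?_
    by_contra hlt
    exact h ⟨i, by simp [hIm]; omega⟩
  -- strict inequalities
  have hcmlt : cm < cm' := by
    rw [hcm, hcm']
    refine Finset.sum_lt_sum_of_nonempty hImne fun i hi => ?_
    rw [hIm] at hi; simp at hi; exact hi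
  have hcplt : cp' < cp := by
    rw [hcp, hcp']
    refine Finset.sum_lt_sum_of_nonempty hIpne fun i hi => ?_
    rw [hIp] at hi; simp at hi; exact hi
  have hcppos : 0 < cp := by
    rw [hcp]
    refine Finset.sum_pos (fun i hi => ?_) hIpne
    rw [hIp] at hi; simp at hi; omega
  have hcm'pos : 0 < cm' := by
    rw [hcm']
    refine Finset.sum_pos (fun i hi => ?_) hImne
    rw [hIm] at hi; simp at hi; omega
  -- value of φ on basis vectors
  have hφB : ∀ j, φ (B j) =
      if c' j < c j then (cm' : ℚ) - cm
      else if c j < c' j then (cp : ℚ) - cp' else 1 := by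
    intro j
    rw [hφ]
    simp only [LinearMap.add_apply, LinearMap.coe_sum, Finset.sum_apply,
      LinearMap.smul_apply, Module.Basis.coord_apply, Module.Basis.repr_self, smul_eq_mul]
    have hsingle : ∀ i : ι, (Finsupp.single j (1:ℚ)) i = if j = i then 1 else 0 :=
      fun i => Finsupp.single_apply
    simp only [hsingle, mul_ite, mul_one, mul_zero, Finset.sum_ite_eq, hIp, hIm, hI0,
      Finset.mem_filter, Finset.mem_univ, true_and]
    split_ifs <;> first | (exfalso; omega) | ring
  -- splitting a sum over univ into the three parts
  have hsplit : ∀ (f : ι → ℚ), ∑ i, f i = ∑ i ∈ Ip, f i + ∑ i ∈ Im, f i + ∑ i ∈ I0, f i := by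
    intro f
    rw [hIp, hIm, hI0,
      ← Finset.sum_filter_add_sum_filter_not Finset.univ (fun i => c' i < c i) f]
    rw [← Finset.sum_filter_add_sum_filter_not
        (Finset.univ.filter fun i => ¬ c' i < c i) (fun i => c i < c' i) f,
      Finset.filter_filter, Finset.filter_filter]
    rw [add_assoc]
    congr 2
    · apply Finset.sum_congr _ fun _ _ => rfl
      ext i; simp; omega
    · apply Finset.sum_congr _ fun _ _ => rfl
      ext i; simp; omega
  -- value of φ on nonneg integer combinations
  have hval : ∀ d : ι → ℕ, φ (∑ i, (d i : ℚ) • B i)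
      = ((cm' : ℚ) - cm) * (∑ i ∈ Ip, (d i : ℚ))
        + ((cp : ℚ) - cp') * (∑ i ∈ Im, (d i : ℚ)) + (∑ i ∈ I0, (d i : ℚ)) := by
    intro d
    rw [map_sum]
    simp only [map_smul, smul_eq_mul, hφB]
    rw [hsplit, Finset.mul_sum, Finset.mul_sum]
    congr 1
    congr 1
    · refine Finset.sum_congr rfl fun i hi => ?_
      rw [hIp] at hi; simp at hi
      rw [if_pos hi]; ring
    · refine Finset.sum_congr rfl fun i hi => ?_
      rw [hIm] at hi; simp at hi
      rw [if_neg (by omega), if_pos hi]; ring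
    · refine Finset.sum_congr rfl fun i hi => ?_
      rw [hI0] at hi; simp at hi
      rw [if_neg (by omega), if_neg (by omega), mul_one]
  have hcast : ∀ (s : Finset ι) (d : ι → ℕ), ∑ i ∈ s, (d i : ℚ) = ((∑ i ∈ s, d i : ℕ) : ℚ) := by
    intro s d; push_cast; rfl
  have hφγ : φ γ = (cm' : ℚ) * cp - (cm : ℚ) * cp' + c0 := by
    rw [hγ, hval c, hcast, hcast, hcast, ← hcp, ← hcm, ← hc0]
    have h1 : (cm : ℚ) ≤ cm' := by exact_mod_cast hcmlt.le
    have h2 : (cp' : ℚ) ≤ cp := by exact_mod_cast hcplt.le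
    ring
  have hφγ' : φ γ' = (cm' : ℚ) * cp - (cm : ℚ) * cp' + c0 := by
    rw [hγ', hval c', hcast, hcast, hcast, ← hcp', ← hcm']
    have hc0' : ∑ i ∈ I0, c' i = c0 := by
      rw [hc0]
      refine Finset.sum_congr rfl fun i hi => ?_
      rw [hI0] at hi; simp at hi; omega
    rw [hc0']
    ring
  have hnlt : cm * cp' < cm' * cp := by nlinarith
  have hBk : ∀ i : ι, ∃ k : ℕ, 0 < k ∧ φ (B i) = k := by
    intro i
    rw [hφB i]
    by_cases h1 : c' i < c i
    · exact ⟨cm' - cm, by omega, by rw [if_pos h1]; push_cast [Nat.cast_sub hcmlt.le]; ring⟩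
    · by_cases h2 : c i < c' i
      · exact ⟨cp - cp', by omega, by
          rw [if_neg h1, if_pos h2]; push_cast [Nat.cast_sub hcplt.le]; ring⟩
      · exact ⟨1, one_pos, by rw [if_neg h1, if_neg h2]; norm_num⟩
  have hncast : ((cm' * cp - cm * cp' + c0 : ℕ) : ℚ) = (cm' : ℚ) * cp - (cm : ℚ) * cp' + c0 := by
    push_cast [Nat.cast_sub hnlt.le]
    ring
  refine ⟨⟨φ, cm' * cp - cm * cp' + c0, by omega, hBk, by rw [hφγ, hncast],
      by rw [hφγ', hncast]⟩, hBk, hφγ, hφγ', cm' * cp - cm * cp' + c0, by omega, hncast⟩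
end
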